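/- arXiv:2512.07653 — 7 statements merged into one kernel-verified Lean document; each statement's English description precedes it below -/
import Mathlib

section
/- The process W_n := θ_1^{−n} G_n(η) is an (ℱ_n)-martingale satisfying (E[|W_{m+n} − W_m|^p])^{1/p} ≤ c_0 θ_1^{−1} M ‖η‖_{ψ_1} Γ_m for all m, n ≥ 0; consequently there exists W_∞ ∈ L^p(ℙ) such that W_n → W_∞ almost surely and in L^p, W is uniformly integrable, and (E[|W_∞ − W_m|^p])^{1/p} ≤ c_0 θ_1^{−1} M ‖η‖_{ψ_1} Γ_m for every m ≥ 0. -/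
open MeasureTheory ProbabilityTheory Filter
open scoped ENNReal NNReal Topology

/-- The weighted supremum norm `‖g‖_ψ = sup_x |g x| / ψ x`, valued in `[0,∞]`. -/
noncomputable def psiNorm {X : Type*} (ψ g : X → ℝ) : ENNReal :=
  ⨆ x, ENNReal.ofReal (|g x| / ψ x)

/-- the Biggins martingale `W_n = θ₁^{-n} G_n(η)` is an `L^p`-Cauchy,
uniformly integrable martingale converging a.s. and in `L^p` to a limit `W_∞`, with
quantitative `L^p` estimates (Step 3 of the proof of Theorem 1). -/
theorem biggins_martingale_Lp_convergence
    {X : Type*} [MeasurableSpace X] (Q : Kernel X X) [IsSFiniteKernel Q]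
    (p : ℝ) (hp1 : 1 < p) (hp2 : p ≤ 2)
    (θ₁ : ℝ) (hθ₁ : 0 < θ₁)
    (c₀ : ℝ) (hc₀ : 0 < c₀) (M : ℝ) (hM : 0 ≤ M)
    (ψ₁ : X → ℝ) (hψ₁meas : Measurable ψ₁) (hψ₁pos : ∀ x, 0 < ψ₁ x)
    (γ : ℕ → ℝ) (hγnonneg : ∀ n, 0 ≤ γ n) (hγsum : Summable γ)
    {Ω : Type*} {mΩ : MeasurableSpace Ω} (μ : Measure Ω) [IsProbabilityMeasure μ]
    (ℱ : Filtration ℕ mΩ) (G : ℕ → Ω → Measure X)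
    -- (a) adaptedness and `L^p` integrability of `G_n g`
    (ha : ∀ g : X → ℝ, Measurable g → psiNorm ψ₁ g < ⊤ → ∀ n : ℕ,
      StronglyMeasurable[ℱ n] (fun ω => ∫ y, g y ∂(G n ω)) ∧
      MemLp (fun ω => ∫ y, g y ∂(G n ω)) (ENNReal.ofReal p) μ)
    -- (b) one-step mean identity: `E[G_{n+1} g ∣ ℱ_n] = G_n (Q g)` a.s.
    (hb : ∀ g : X → ℝ, Measurable g → psiNorm ψ₁ g < ⊤ → ∀ n : ℕ,
      μ[fun ω => ∫ y, g y ∂(G (n + 1) ω) | ℱ n]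
        =ᵐ[μ] fun ω => ∫ x, (∫ y, g y ∂(Q x)) ∂(G n ω))
    -- (c) `L^p` dispersion bound
    (hc : ∀ g : X → ℝ, Measurable g → psiNorm ψ₁ g < ⊤ → ∀ n : ℕ,
      (∫ ω, |(∫ y, g y ∂(G (n + 1) ω)) - ∫ x, (∫ y, g y ∂(Q x)) ∂(G n ω)| ^ p ∂μ) ^ (1 / p)
        ≤ c₀ * γ n * θ₁ ^ n * M * (psiNorm ψ₁ g).toReal)
    -- `η` : right eigenfunction of `Q` for `θ₁`, with finite `ψ₁`-norm
    (η : X → ℝ) (hηmeas : Measurable η) (hηnorm : psiNorm ψ₁ η < ⊤)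
    (hηeigen : ∀ x, ∫ y, η y ∂(Q x) = θ₁ * η x) :
    Martingale (fun n ω => (θ₁ ^ n)⁻¹ * ∫ y, η y ∂(G n ω)) ℱ μ ∧
    (∀ m n : ℕ,
      (∫ ω, |(θ₁ ^ (m + n))⁻¹ * (∫ y, η y ∂(G (m + n) ω))
          - (θ₁ ^ m)⁻¹ * (∫ y, η y ∂(G m ω))| ^ p ∂μ) ^ (1 / p)
        ≤ c₀ * θ₁⁻¹ * M * (psiNorm ψ₁ η).toReal * ∑' k : ℕ, γ (m + k)) ∧
    UniformIntegrable (fun n ω => (θ₁ ^ n)⁻¹ * ∫ y, η y ∂(G n ω)) 1 μ ∧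
    ∃ Winf : Ω → ℝ, MemLp Winf (ENNReal.ofReal p) μ ∧
      (∀ᵐ ω ∂μ, Tendsto (fun n => (θ₁ ^ n)⁻¹ * ∫ y, η y ∂(G n ω)) atTop (nhds (Winf ω))) ∧
      Tendsto (fun n => ∫ ω, |(θ₁ ^ n)⁻¹ * (∫ y, η y ∂(G n ω)) - Winf ω| ^ p ∂μ)
        atTop (nhds 0) ∧
      ∀ m : ℕ,
        (∫ ω, |Winf ω - (θ₁ ^ m)⁻¹ * (∫ y, η y ∂(G m ω))| ^ p ∂μ) ^ (1 / p)
          ≤ c₀ * θ₁⁻¹ * M * (psiNorm ψ₁ η).toReal * ∑' k : ℕ, γ (m + k) := by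
  have hp0 : (0:ℝ) < p := lt_trans one_pos hp1
  have hpne : p ≠ 0 := ne_of_gt hp0
  set P : ℝ≥0∞ := ENNReal.ofReal p with hPdef
  have hP1 : (1:ℝ≥0∞) ≤ P := by
    rw [hPdef, ← ENNReal.ofReal_one]
    exact ENNReal.ofReal_le_ofReal hp1.le
  have hP0 : P ≠ 0 := by
    rw [hPdef]; simp [ENNReal.ofReal_eq_zero, not_le, hp0]
  have hPtop : P ≠ ⊤ := ENNReal.ofReal_ne_top
  have hPto : P.toReal = p := ENNReal.toReal_ofReal hp0.le
  set Nη : ℝ := (psiNorm ψ₁ η).toReal with hNη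
  have hNηnn : 0 ≤ Nη := ENNReal.toReal_nonneg
  set K : ℝ := c₀ * θ₁⁻¹ * M * Nη with hK
  have hKnn : 0 ≤ K := by positivity
  set W : ℕ → Ω → ℝ := fun n ω => (θ₁ ^ n)⁻¹ * ∫ y, η y ∂(G n ω) with hW
  have haη := ha η hηmeas hηnorm
  have hWmem : ∀ n, MemLp (W n) P μ := fun n => ((haη n).2).const_mul _
  have hWmeas : ∀ n, AEStronglyMeasurable (W n) μ := fun n => (hWmem n).1
  have hWint : ∀ n, Integrable (W n) μ := fun n => (hWmem n).integrable hP1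
  have hWadp : StronglyAdapted ℱ W := fun n => ((haη n).1).const_mul _
  -- eigen rewrite
  have hQη : ∀ n, (fun ω => ∫ x, (∫ y, η y ∂(Q x)) ∂(G n ω))
      = fun ω => θ₁ * ∫ y, η y ∂(G n ω) := by
    intro n; funext ω
    simp_rw [hηeigen]
    exact integral_const_mul θ₁ _
  -- the L^p norm identity
  have key : ∀ f : Ω → ℝ, MemLp f P μ →
      (∫ ω, |f ω| ^ p ∂μ) ^ (1 / p) = (eLpNorm f P μ).toReal := by
    intro f hf
    rw [hf.eLpNorm_eq_integral_rpow_norm hP0 hPtop]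
    rw [ENNReal.toReal_ofReal (Real.rpow_nonneg
      (integral_nonneg fun ω => Real.rpow_nonneg (norm_nonneg _) _) _)]
    simp [Real.norm_eq_abs, hPto, one_div]
  -- Martingale
  have hmart : Martingale W ℱ μ := by
    refine martingale_nat hWadp hWint fun n => ?_
    have h1 := hb η hηmeas hηnorm n
    rw [hQη n] at h1
    have h2 : μ[W (n+1) | ℱ n]
        =ᵐ[μ] (θ₁ ^ (n+1))⁻¹ • μ[fun ω => ∫ y, η y ∂(G (n+1) ω) | ℱ n] := by
      have : W (n+1) = (θ₁ ^ (n+1))⁻¹ • fun ω => ∫ y, η y ∂(G (n+1) ω) := by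
        funext ω; simp [hW, smul_eq_mul]
      rw [this]
      exact condExp_smul _ _ _
    refine (h2.trans ?_).symm
    filter_upwards [h1] with ω hω
    have hθne : θ₁ ≠ 0 := ne_of_gt hθ₁
    simp only [Pi.smul_apply, smul_eq_mul, hω, hW]
    field_simp
    ring
  -- one-step difference bound
  have hD : ∀ n, eLpNorm (W (n+1) - W n) P μ ≤ ENNReal.ofReal (K * γ n) := by
    intro n
    set D : Ω → ℝ := fun ω =>
      (∫ y, η y ∂(G (n+1) ω)) - ∫ x, (∫ y, η y ∂(Q x)) ∂(G n ω) with hDdef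
    have hDmem : MemLp D P μ := by
      have : D = fun ω =>
          (∫ y, η y ∂(G (n+1) ω)) - θ₁ * ∫ y, η y ∂(G n ω) := by
        funext ω; rw [hDdef]; simp [congrFun (hQη n) ω]
      rw [this]
      exact ((haη (n+1)).2).sub (((haη n).2).const_mul θ₁)
    have hDle : eLpNorm D P μ ≤ ENNReal.ofReal (c₀ * γ n * θ₁ ^ n * M * Nη) := by
      have h := hc η hηmeas hηnorm n
      rw [key D hDmem] at h
      calc eLpNorm D P μ = ENNReal.ofReal (eLpNorm D P μ).toReal := by
            rw [ENNReal.ofReal_toReal (hDmem.eLpNorm_ne_top)]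
        _ ≤ ENNReal.ofReal (c₀ * γ n * θ₁ ^ n * M * Nη) := ENNReal.ofReal_le_ofReal h
    have hWD : W (n+1) - W n = (θ₁ ^ (n+1))⁻¹ • D := by
      funext ω
      have hθne : θ₁ ≠ 0 := ne_of_gt hθ₁
      simp only [Pi.sub_apply, Pi.smul_apply, smul_eq_mul, hW, hDdef,
        congrFun (hQη n) ω]
      field_simp
      ring
    rw [hWD, eLpNorm_const_smul]
    calc (‖(θ₁ ^ (n+1))⁻¹‖₊ : ℝ≥0∞) * eLpNorm D P μ
        ≤ ENNReal.ofReal ((θ₁ ^ (n+1))⁻¹) * ENNReal.ofReal (c₀ * γ n * θ₁ ^ n * M * Nη) := by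
          refine mul_le_mul' (le_of_eq ?_) hDle
          rw [← ENNReal.ofReal_coe_nnreal]
          congr 1
          simp [Real.coe_toNNReal', abs_of_pos (inv_pos.2 (pow_pos hθ₁ (n+1)))]
          rw [abs_of_pos hθ₁]
      _ = ENNReal.ofReal (K * γ n) := by
          rw [← ENNReal.ofReal_mul (by positivity)]
          congr 1
          have hθne : θ₁ ≠ 0 := ne_of_gt hθ₁
          rw [hK]
          field_simp
          ring
  -- summability of tails
  have hΓsum : ∀ m : ℕ, Summable (fun k => γ (m + k)) := fun m =>
    ((summable_nat_add_iff m).2 hγsum).congr fun k => by rw [Nat.add_comm]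
  have hΓnn : ∀ m : ℕ, 0 ≤ ∑' k, γ (m + k) := fun m => tsum_nonneg fun k => hγnonneg _
  have hpartial : ∀ m n : ℕ, ∑ k ∈ Finset.range n, γ (m + k) ≤ ∑' k, γ (m + k) :=
    fun m n => Summable.sum_le_tsum _ (fun k _ => hγnonneg _) (hΓsum m)
  -- telescoping Cauchy estimate
  have hCauchy : ∀ m n : ℕ, eLpNorm (W (m + n) - W m) P μ
      ≤ ENNReal.ofReal (K * ∑ k ∈ Finset.range n, γ (m + k)) := by
    intro m n
    induction n with
    | zero => simp
    | succ n ih =>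
      have hsplit : W (m + (n + 1)) - W m
          = (W ((m + n) + 1) - W (m + n)) + (W (m + n) - W m) := by
        funext ω
        show W (m + (n+1)) ω - W m ω = _
        have : m + (n + 1) = (m + n) + 1 := rfl
        rw [this]
        simp only [Pi.add_apply, Pi.sub_apply]
        ring
      rw [hsplit]
      calc eLpNorm ((W ((m + n) + 1) - W (m + n)) + (W (m + n) - W m)) P μ
          ≤ eLpNorm (W ((m + n) + 1) - W (m + n)) P μ + eLpNorm (W (m + n) - W m) P μ :=
            eLpNorm_add_le ((hWmeas _).sub (hWmeas _)) ((hWmeas _).sub (hWmeas _)) hP1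
        _ ≤ ENNReal.ofReal (K * γ (m + n))
            + ENNReal.ofReal (K * ∑ k ∈ Finset.range n, γ (m + k)) := add_le_add (hD _) ih
        _ = ENNReal.ofReal (K * ∑ k ∈ Finset.range (n + 1), γ (m + k)) := by
            rw [← ENNReal.ofReal_add (mul_nonneg hKnn (hγnonneg _))
              (mul_nonneg hKnn (Finset.sum_nonneg fun k _ => hγnonneg _))]
            congr 1
            rw [Finset.sum_range_succ]
            ring
  have hCauchyT : ∀ m n : ℕ, eLpNorm (W (m + n) - W m) P μ
      ≤ ENNReal.ofReal (K * ∑' k, γ (m + k)) := fun m n =>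
    (hCauchy m n).trans (ENNReal.ofReal_le_ofReal
      (mul_le_mul_of_nonneg_left (hpartial m n) hKnn))
  -- part 2 in real form
  have part2 : ∀ m n : ℕ,
      (∫ ω, |W (m + n) ω - W m ω| ^ p ∂μ) ^ (1 / p) ≤ K * ∑' k, γ (m + k) := by
    intro m n
    have hmem : MemLp (W (m + n) - W m) P μ := (hWmem (m + n)).sub (hWmem m)
    have h1 : (∫ ω, |W (m + n) ω - W m ω| ^ p ∂μ) ^ (1 / p)
        = (eLpNorm (W (m + n) - W m) P μ).toReal := key _ hmem
    rw [h1]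
    calc (eLpNorm (W (m + n) - W m) P μ).toReal
        ≤ (ENNReal.ofReal (K * ∑' k, γ (m + k))).toReal :=
          ENNReal.toReal_mono ENNReal.ofReal_ne_top (hCauchyT m n)
      _ = K * ∑' k, γ (m + k) := ENNReal.toReal_ofReal (mul_nonneg hKnn (hΓnn m))
  -- uniform L¹ bound
  have hbd1 : ∀ n, eLpNorm (W n) P μ
      ≤ ENNReal.ofReal (K * ∑' k, γ k) + eLpNorm (W 0) P μ := by
    intro n
    have hrw : W n = (W n - W 0) + W 0 := by funext ω; simp
    have h0 : eLpNorm (W n) P μ ≤ eLpNorm (W n - W 0) P μ + eLpNorm (W 0) P μ := by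
      nth_rewrite 1 [hrw]
      exact eLpNorm_add_le ((hWmeas n).sub (hWmeas 0)) (hWmeas 0) hP1
    refine h0.trans (add_le_add ?_ le_rfl)
    simpa using hCauchyT 0 n
  have hBne : ENNReal.ofReal (K * ∑' k, γ k) + eLpNorm (W 0) P μ ≠ ⊤ :=
    ENNReal.add_ne_top.2 ⟨ENNReal.ofReal_ne_top, (hWmem 0).eLpNorm_ne_top⟩
  set R : ℝ≥0 := (ENNReal.ofReal (K * ∑' k, γ k) + eLpNorm (W 0) P μ).toNNReal with hR
  have hbdd : ∀ n, eLpNorm (W n) 1 μ ≤ (R : ℝ≥0∞) := by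
    intro n
    refine ((eLpNorm_le_eLpNorm_of_exponent_le hP1 (hWmeas n)).trans (hbd1 n)).trans_eq ?_
    rw [hR, ENNReal.coe_toNNReal hBne]
  -- a.s. convergence via martingale convergence
  have haeW := hmart.submartingale.ae_tendsto_limitProcess hbdd
  set Winf : Ω → ℝ := ℱ.limitProcess W μ with hWinf
  have hWinfmeas : AEStronglyMeasurable Winf μ :=
    aestronglyMeasurable_of_tendsto_ae atTop hWmeas haeW
  -- Fatou bound
  have hFatou : ∀ m : ℕ, eLpNorm (Winf - W m) P μ
      ≤ ENNReal.ofReal (K * ∑' k, γ (m + k)) := by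
    intro m
    have htend : ∀ᵐ ω ∂μ, Tendsto (fun n => (W (m + n) - W m) ω) atTop
        (𝓝 ((Winf - W m) ω)) := by
      filter_upwards [haeW] with ω hω
      have h1 : Tendsto (fun n => W (m + n) ω) atTop (𝓝 (Winf ω)) := by
        refine (hω.comp (tendsto_add_atTop_nat m)).congr fun n => ?_
        simp [Nat.add_comm]
      simpa using h1.sub (tendsto_const_nhds (x := W m ω))
    refine (Lp.eLpNorm_lim_le_liminf_eLpNorm
      (fun n => (hWmeas (m + n)).sub (hWmeas m)) _ htend).trans ?_
    refine (Filter.liminf_le_liminf (Eventually.of_forall fun n => hCauchyT m n)).trans ?_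
    simp [Filter.liminf_const]
  have hWinfmem : MemLp Winf P μ := by
    refine ⟨hWinfmeas, ?_⟩
    have hrw : Winf = (Winf - W 0) + W 0 := by funext ω; simp
    calc eLpNorm Winf P μ ≤ eLpNorm (Winf - W 0) P μ + eLpNorm (W 0) P μ := by
          nth_rewrite 1 [hrw]
          exact eLpNorm_add_le (hWinfmeas.sub (hWmeas 0)) (hWmeas 0) hP1
      _ < ⊤ := ENNReal.add_lt_top.2 ⟨lt_of_le_of_lt (by simpa using hFatou 0)
          ENNReal.ofReal_lt_top, (hWmem 0).eLpNorm_lt_top⟩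
  -- Lᵖ convergence
  have hγtail : Tendsto (fun m => ∑' k, γ (m + k)) atTop (𝓝 0) := by
    refine (tendsto_sum_nat_add γ).congr fun m => tsum_congr fun k => by rw [Nat.add_comm]
  have hofReal : Tendsto (fun m => ENNReal.ofReal (K * ∑' k, γ (m + k))) atTop (𝓝 0) := by
    have h1 : Tendsto (fun m => K * ∑' k, γ (m + k)) atTop (𝓝 0) := by
      simpa using hγtail.const_mul K
    have := (ENNReal.continuous_ofReal.tendsto 0).comp h1
    simpa [Function.comp_def] using this
  have hLpTend : Tendsto (fun n => eLpNorm (W n - Winf) P μ) atTop (𝓝 0) := by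
    refine tendsto_of_tendsto_of_tendsto_of_le_of_le tendsto_const_nhds hofReal
      (fun n => zero_le) (fun n => ?_)
    rw [eLpNorm_sub_comm]
    exact hFatou n
  -- uniform integrability
  have hmem1 : ∀ n, MemLp (W n) 1 μ := fun n => (hWmem n).mono_exponent hP1
  have hWinf1 : MemLp Winf 1 μ := hWinfmem.mono_exponent hP1
  have hL1tend : Tendsto (fun n => eLpNorm (W n - Winf) 1 μ) atTop (𝓝 0) := by
    refine tendsto_of_tendsto_of_tendsto_of_le_of_le tendsto_const_nhds hLpTend
      (fun n => zero_le) (fun n =>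
        eLpNorm_le_eLpNorm_of_exponent_le hP1 ((hWmeas n).sub hWinfmeas))
  have hUnif : UnifIntegrable W 1 μ :=
    unifIntegrable_of_tendsto_Lp le_rfl ENNReal.one_ne_top hmem1 hWinf1 hL1tend
  have hUI : UniformIntegrable W 1 μ := ⟨fun n => hWmeas n, hUnif, R, hbdd⟩
  -- convergence of pth moments
  have hinv : ∀ f : Ω → ℝ, MemLp f P μ →
      ((eLpNorm f P μ).toReal) ^ p = ∫ ω, |f ω| ^ p ∂μ := by
    intro f hf
    have hnn : 0 ≤ ∫ ω, |f ω| ^ p ∂μ :=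
      integral_nonneg fun ω => Real.rpow_nonneg (abs_nonneg _) _
    rw [← key f hf, ← Real.rpow_mul hnn, one_div, inv_mul_cancel₀ hpne, Real.rpow_one]
  have hToReal : Tendsto (fun n => (eLpNorm (W n - Winf) P μ).toReal) atTop (𝓝 0) := by
    have := (ENNReal.tendsto_toReal (a := 0) (by simp)).comp hLpTend
    simpa [Function.comp_def] using this
  have hmomTend : Tendsto (fun n => ∫ ω, |W n ω - Winf ω| ^ p ∂μ) atTop (𝓝 0) := by
    have hpow : Tendsto (fun n => ((eLpNorm (W n - Winf) P μ).toReal) ^ p) atTop (𝓝 0) := by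
      have := hToReal.rpow_const (p := p) (Or.inr hp0.le)
      simpa [Real.zero_rpow hpne] using this
    exact hpow.congr fun n => hinv _ ((hWmem n).sub hWinfmem)
  -- final bound
  have part6 : ∀ m : ℕ, (∫ ω, |Winf ω - W m ω| ^ p ∂μ) ^ (1 / p)
      ≤ K * ∑' k, γ (m + k) := by
    intro m
    have hmem : MemLp (Winf - W m) P μ := hWinfmem.sub (hWmem m)
    have h1 : (∫ ω, |Winf ω - W m ω| ^ p ∂μ) ^ (1 / p)
        = (eLpNorm (Winf - W m) P μ).toReal := key _ hmem
    rw [h1]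
    calc (eLpNorm (Winf - W m) P μ).toReal
        ≤ (ENNReal.ofReal (K * ∑' k, γ (m + k))).toReal :=
          ENNReal.toReal_mono ENNReal.ofReal_ne_top (hFatou m)
      _ = K * ∑' k, γ (m + k) := ENNReal.toReal_ofReal (mul_nonneg hKnn (hΓnn m))
  exact ⟨hmart, part2, hUI, Winf, hWinfmem, haeW, hmomTend, part6⟩
end

section
/- If there exists p ∈ (1,2] such that E[(Σ_{i∈ℕ} u_i)·log_+(Σ_{i∈ℕ} u_i)] < ∞ and E[Σ_{i∈ℕ} u_i^p] < 1, then the nonnegative martingale (W_n)_{n≥0} is uniformly integrable. -/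
open MeasureTheory ProbabilityTheory Filter

/-- The weight `L(e) = ∏_{k=1}^{|e|} U_{e₁…e_{k−1}}(e_k)` of a word `e` in the
Mandelbrot cascade built from the family `U`. -/
noncomputable def cascadeWeight {Ω : Type*} (U : List ℕ → Ω → ℕ → NNReal)
    (e : List ℕ) (ω : Ω) : NNReal :=
  ∏ k ∈ Finset.range e.length, U (e.take k) ω (e.getD k 0)

/-- The total mass `W_n = ∑_{e ∈ ℕ^n} L(e)` of generation `n`, valued in `[0,∞]`. -/
noncomputable def cascadeMass {Ω : Type*} (U : List ℕ → Ω → ℕ → NNReal)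
    (n : ℕ) (ω : Ω) : ENNReal :=
  ∑' e : {l : List ℕ // l.length = n}, (cascadeWeight U (e : List ℕ) ω : ENNReal)

open scoped ENNReal NNReal

noncomputable section

namespace MandelbrotAux

variable {Ω : Type*} {mΩ : MeasurableSpace Ω}

/-- the sum of an element of the type space -/
def sig (u : ℕ → NNReal) : ℝ≥0∞ := ∑' i, (u i : ℝ≥0∞)

lemma measurable_sig : Measurable sig := by
  apply Measurable.ennreal_tsum (fun i => ?_)
  exact (measurable_pi_apply i).coe_nnreal_ennreal

/-- reversed-index cascade weight -/
def rvw (U : List ℕ → Ω → ℕ → NNReal) : List ℕ → Ω → ℝ≥0∞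
  | [] => fun _ => 1
  | i :: f => fun ω => rvw U f ω * (U f.reverse ω i : ℝ≥0∞)

/-- truncated reversed-index cascade weight, threshold `c k` at generation `k` -/
def tvw (U : List ℕ → Ω → ℕ → NNReal) (c : ℕ → ℝ≥0∞) : List ℕ → Ω → ℝ≥0∞
  | [] => fun _ => 1
  | i :: f => fun ω =>
      if tvw U c f ω * sig (U f.reverse ω) ≤ c f.length
      then tvw U c f ω * (U f.reverse ω i : ℝ≥0∞) else 0

lemma tvw_le_rvw (U : List ℕ → Ω → ℕ → NNReal) (c : ℕ → ℝ≥0∞) (f : List ℕ) (ω : Ω) :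
    tvw U c f ω ≤ rvw U f ω := by
  induction f with
  | nil => exact le_rfl
  | cons i f ih =>
    simp only [tvw, rvw]
    split
    · exact mul_le_mul_left ih _
    · exact zero_le

/-- dependency set of the (truncated) weight of reversed word `f` -/
def Dep : List ℕ → Finset (List ℕ)
  | [] => ∅
  | i :: f => insert f.reverse (Dep f)

lemma length_lt_of_mem_Dep {f : List ℕ} {g : List ℕ} (hg : g ∈ Dep f) :
    g.length < f.length := by
  induction f with
  | nil => simp [Dep] at hg
  | cons i f ih =>
    simp only [Dep, Finset.mem_insert] at hg
    rcases hg with h | h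
    · simp [h]
    · exact (ih h).trans (Nat.lt_succ_self _)

/-- `F` is a measurable function of the coordinates in `s` -/
def DepOn (U : List ℕ → Ω → ℕ → NNReal) {β : Type*} [MeasurableSpace β]
    (F : Ω → β) (s : Finset (List ℕ)) : Prop :=
  ∃ K : ((i : s) → ℕ → NNReal) → β, Measurable K ∧ ∀ ω, F ω = K (fun i => U i ω)

namespace DepOn

variable {U : List ℕ → Ω → ℕ → NNReal} {β γ : Type*} [MeasurableSpace β] [MeasurableSpace γ]

lemma measurable (hU : ∀ e, Measurable (U e)) {F : Ω → β} {s : Finset (List ℕ)}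
    (h : DepOn U F s) : Measurable F := by
  obtain ⟨K, hK, hFK⟩ := h
  have : Measurable fun ω => (fun i : s => U i ω) :=
    measurable_pi_lambda _ fun i => hU i
  rw [funext hFK]; exact hK.comp this

lemma mono {F : Ω → β} {s t : Finset (List ℕ)} (hst : s ⊆ t) (h : DepOn U F s) :
    DepOn U F t := by
  obtain ⟨K, hK, hFK⟩ := h
  refine ⟨fun x => K (fun i => x ⟨i, hst i.2⟩), ?_, fun ω => hFK ω⟩
  exact hK.comp (measurable_pi_lambda _ fun i => measurable_pi_apply _)

lemma const (b : β) (s : Finset (List ℕ)) : DepOn U (fun _ => b) s :=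
  ⟨fun _ => b, measurable_const, fun _ => rfl⟩

lemma comp {F : Ω → β} {s : Finset (List ℕ)} (h : DepOn U F s) {φ : β → γ}
    (hφ : Measurable φ) : DepOn U (fun ω => φ (F ω)) s := by
  obtain ⟨K, hK, hFK⟩ := h
  exact ⟨φ ∘ K, hφ.comp hK, fun ω => by simp [hFK ω]⟩

lemma prod_mk {F : Ω → β} {G : Ω → γ} {s : Finset (List ℕ)} (hF : DepOn U F s)
    (hG : DepOn U G s) : DepOn U (fun ω => (F ω, G ω)) s := by
  obtain ⟨K, hK, hFK⟩ := hF
  obtain ⟨K', hK', hGK⟩ := hG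
  exact ⟨fun x => (K x, K' x), hK.prodMk hK', fun ω => by simp [hFK ω, hGK ω]⟩

lemma coord (g : List ℕ) : DepOn U (fun ω => U g ω) {g} :=
  ⟨fun x => x ⟨g, Finset.mem_singleton_self g⟩, measurable_pi_apply _, fun ω => rfl⟩

end DepOn

lemma rvw_depOn {U : List ℕ → Ω → ℕ → NNReal} (f : List ℕ) :
    DepOn U (rvw U f) (Dep f) := by
  induction f with
  | nil => exact DepOn.const 1 _
  | cons i f ih =>
    have h1 : DepOn U (fun ω => (rvw U f ω, U f.reverse ω)) (Dep (i :: f)) := by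
      refine DepOn.prod_mk (ih.mono ?_) ((DepOn.coord f.reverse).mono ?_)
      · exact fun x hx => Finset.mem_insert_of_mem hx
      · intro x hx
        rw [Finset.mem_singleton] at hx
        exact hx ▸ Finset.mem_insert_self _ _
    have hm : Measurable fun q : ℝ≥0∞ × (ℕ → NNReal) => q.1 * (q.2 i : ℝ≥0∞) :=
      measurable_fst.mul (((measurable_pi_apply i).comp measurable_snd).coe_nnreal_ennreal)
    exact h1.comp hm

lemma tvw_depOn {U : List ℕ → Ω → ℕ → NNReal} (c : ℕ → ℝ≥0∞) (f : List ℕ) :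
    DepOn U (tvw U c f) (Dep f) := by
  induction f with
  | nil => exact DepOn.const 1 _
  | cons i f ih =>
    have h1 : DepOn U (fun ω => (tvw U c f ω, U f.reverse ω)) (Dep (i :: f)) := by
      refine DepOn.prod_mk (ih.mono ?_) ((DepOn.coord f.reverse).mono ?_)
      · exact fun x hx => Finset.mem_insert_of_mem hx
      · intro x hx
        rw [Finset.mem_singleton] at hx
        exact hx ▸ Finset.mem_insert_self _ _
    have hm : Measurable fun q : ℝ≥0∞ × (ℕ → NNReal) =>
        if q.1 * sig q.2 ≤ c f.length then q.1 * (q.2 i : ℝ≥0∞) else 0 := by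
      refine Measurable.ite ?_ ?_ measurable_const
      · exact measurableSet_le (measurable_fst.mul (measurable_sig.comp measurable_snd))
          measurable_const
      · exact measurable_fst.mul (((measurable_pi_apply i).comp measurable_snd).coe_nnreal_ennreal)
    exact h1.comp hm

lemma measurable_rvw {U : List ℕ → Ω → ℕ → NNReal} (hU : ∀ e, Measurable (U e)) (f : List ℕ) :
    Measurable (rvw U f) := (rvw_depOn f).measurable hU

lemma measurable_tvw {U : List ℕ → Ω → ℕ → NNReal} (hU : ∀ e, Measurable (U e))
    (c : ℕ → ℝ≥0∞) (f : List ℕ) : Measurable (tvw U c f) := (tvw_depOn c f).measurable hU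

section Master

variable {μ : Measure Ω} [IsProbabilityMeasure μ] {ν : Measure (ℕ → NNReal)}
  [IsProbabilityMeasure ν] {U : List ℕ → Ω → ℕ → NNReal}

/-- Master Fubini lemma: integrating out one fresh coordinate. -/
lemma master (hUmeas : ∀ e, Measurable (U e)) (hUlaw : ∀ e, Measure.map (U e) μ = ν)
    (hUindep : iIndepFun U μ)
    {β : Type*} [MeasurableSpace β] {s : Finset (List ℕ)} {g : List ℕ} (hg : g ∉ s)
    {F : Ω → β} (hF : DepOn U F s) {Φ : β → (ℕ → NNReal) → ℝ≥0∞}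
    (hΦ : Measurable (Function.uncurry Φ)) :
    ∫⁻ ω, Φ (F ω) (U g ω) ∂μ = ∫⁻ ω, ∫⁻ u, Φ (F ω) u ∂ν ∂μ := by
  obtain ⟨K, hK, hFK⟩ := hF
  have hFmeas : Measurable F := DepOn.measurable hUmeas ⟨K, hK, hFK⟩
  have hindep : IndepFun F (U g) μ := by
    have h0 := hUindep.indepFun_finset s {g}
      (Finset.disjoint_singleton_right.mpr hg) hUmeas
    have := h0.comp (φ := K)
      (ψ := fun x : (i : ({g} : Finset (List ℕ))) → ℕ → NNReal =>
        x ⟨g, Finset.mem_singleton_self g⟩) (_mγ' := MeasurableSpace.pi) hK (measurable_pi_apply _)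
    have heq1 : (K ∘ fun a (i : s) => U (↑i) a) = F := funext fun ω => (hFK ω).symm
    have heq2 : ((fun x : (i : ({g} : Finset (List ℕ))) → ℕ → NNReal =>
        x ⟨g, Finset.mem_singleton_self g⟩) ∘ fun a (i : ({g} : Finset (List ℕ))) => U (↑i) a)
        = U g := rfl
    rwa [heq1, heq2] at this
  have hmap : μ.map (fun ω => (F ω, U g ω)) = (μ.map F).prod (μ.map (U g)) :=
    (indepFun_iff_map_prod_eq_prod_map_map hFmeas.aemeasurable
      (hUmeas g).aemeasurable).mp hindep
  have hlawg : μ.map (U g) = ν := hUlaw g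
  calc ∫⁻ ω, Φ (F ω) (U g ω) ∂μ
      = ∫⁻ q : β × (ℕ → NNReal), Function.uncurry Φ q ∂(μ.map (fun ω => (F ω, U g ω))) := by
        rw [lintegral_map hΦ (hFmeas.prodMk (hUmeas g))]; rfl
    _ = ∫⁻ q : β × (ℕ → NNReal), Function.uncurry Φ q ∂((μ.map F).prod ν) := by
        rw [hmap, hlawg]
    _ = ∫⁻ x, ∫⁻ u, Φ x u ∂ν ∂(μ.map F) := lintegral_prod _ hΦ.aemeasurable
    _ = ∫⁻ ω, ∫⁻ u, Φ (F ω) u ∂ν ∂μ := by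
        rw [lintegral_map ?_ hFmeas]
        exact Measurable.lintegral_prod_right hΦ

end Master


section Gen

/-- generation-`n` reversed words -/
abbrev Gen (n : ℕ) := {l : List ℕ // l.length = n}

instance (n : ℕ) : Countable (Gen n) := Subtype.countable

instance : Unique (Gen 0) where
  default := ⟨[], rfl⟩
  uniq := fun f => Subtype.ext (List.length_eq_zero_iff.mp f.2)

/-- cons equivalence between generations -/
def genSuccEquiv (n : ℕ) : ℕ × Gen n ≃ Gen (n + 1) where
  toFun := fun p => ⟨p.1 :: p.2.1, by simp [p.2.2]⟩
  invFun := fun g => (g.1.headI, ⟨g.1.tail, by simp [List.length_tail, g.2]⟩)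
  left_inv := fun p => by ext <;> simp
  right_inv := fun g => by
    obtain ⟨l, hl⟩ := g
    match l, hl with
    | i :: t, hl => simp

lemma tsum_gen_succ {n : ℕ} (H : List ℕ → ℝ≥0∞) :
    ∑' g : Gen (n + 1), H g.1 = ∑' f : Gen n, ∑' i : ℕ, H (i :: f.1) := by
  rw [← Equiv.tsum_eq (genSuccEquiv n) (fun g => H g.1)]
  rw [ENNReal.tsum_prod']
  rw [ENNReal.tsum_comm]
  rfl

end Gen

section Mass

variable (U : List ℕ → Ω → ℕ → NNReal)

/-- total mass of generation `n` -/
def Wm (n : ℕ) (ω : Ω) : ℝ≥0∞ := ∑' f : Gen n, rvw U f.1 ω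

/-- total `p`-mass of generation `n` -/
def Wpm (p : ℝ) (n : ℕ) (ω : Ω) : ℝ≥0∞ := ∑' f : Gen n, rvw U f.1 ω ^ p

/-- total truncated mass of generation `n` -/
def TWm (c : ℕ → ℝ≥0∞) (n : ℕ) (ω : Ω) : ℝ≥0∞ := ∑' f : Gen n, tvw U c f.1 ω

lemma Wm_zero (ω : Ω) : Wm U 0 ω = 1 := by
  rw [Wm, tsum_eq_single (default : Gen 0) (fun b hb => absurd (Subsingleton.elim b default) hb)]
  rfl

lemma TWm_zero (c : ℕ → ℝ≥0∞) (ω : Ω) : TWm U c 0 ω = 1 := by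
  rw [TWm, tsum_eq_single (default : Gen 0) (fun b hb => absurd (Subsingleton.elim b default) hb)]
  rfl

lemma TWm_le_Wm (c : ℕ → ℝ≥0∞) (n : ℕ) (ω : Ω) : TWm U c n ω ≤ Wm U n ω :=
  ENNReal.tsum_le_tsum fun f => tvw_le_rvw U c f.1 ω

lemma Wm_succ (n : ℕ) (ω : Ω) :
    Wm U (n + 1) ω = ∑' f : Gen n, rvw U f.1 ω * sig (U f.1.reverse ω) := by
  rw [Wm, tsum_gen_succ (fun l => rvw U l ω)]
  refine tsum_congr fun f => ?_
  simp only [rvw]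
  rw [ENNReal.tsum_mul_left]
  rfl

lemma Wpm_succ (p : ℝ) (hp : 0 ≤ p) (n : ℕ) (ω : Ω) :
    Wpm U p (n + 1) ω
      = ∑' f : Gen n, rvw U f.1 ω ^ p * ∑' i : ℕ, (U f.1.reverse ω i : ℝ≥0∞) ^ p := by
  rw [Wpm, tsum_gen_succ (fun l => rvw U l ω ^ p)]
  refine tsum_congr fun f => ?_
  have h1 : ∀ i : ℕ, rvw U (i :: f.1) ω ^ p
      = rvw U f.1 ω ^ p * (U f.1.reverse ω i : ℝ≥0∞) ^ p := fun i => by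
    simp only [rvw]
    exact ENNReal.mul_rpow_of_nonneg _ _ hp
  simp_rw [h1]
  exact ENNReal.tsum_mul_left

lemma TWm_succ (c : ℕ → ℝ≥0∞) (n : ℕ) (ω : Ω) :
    TWm U c (n + 1) ω = ∑' f : Gen n,
      (if tvw U c f.1 ω * sig (U f.1.reverse ω) ≤ c n
        then tvw U c f.1 ω * sig (U f.1.reverse ω) else 0) := by
  rw [TWm, tsum_gen_succ (fun l => tvw U c l ω)]
  refine tsum_congr fun f => ?_
  simp only [tvw, f.2]
  by_cases h : tvw U c f.1 ω * sig (U f.1.reverse ω) ≤ c n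
  · simp only [h, if_true]
    rw [ENNReal.tsum_mul_left]
    rfl
  · simp only [h, if_false, tsum_zero]

lemma measurable_Wm (hU : ∀ e, Measurable (U e)) (n : ℕ) : Measurable (Wm U n) :=
  Measurable.ennreal_tsum fun f => measurable_rvw hU f.1

lemma measurable_TWm (hU : ∀ e, Measurable (U e)) (c : ℕ → ℝ≥0∞) (n : ℕ) :
    Measurable (TWm U c n) :=
  Measurable.ennreal_tsum fun f => measurable_tvw hU c f.1

end Mass

section Expectations

variable {μ : Measure Ω} [IsProbabilityMeasure μ] {ν : Measure (ℕ → NNReal)}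
  [IsProbabilityMeasure ν] {U : List ℕ → Ω → ℕ → NNReal}
  (hUmeas : ∀ e, Measurable (U e)) (hUlaw : ∀ e, Measure.map (U e) μ = ν)
  (hUindep : iIndepFun U μ)

include hUmeas hUlaw hUindep

/-- one-generation step for sums over a generation, integrating out the fresh coordinates -/
lemma gen_step {n : ℕ} (G : Gen n → Ω → ℝ≥0∞) (hG : ∀ f, DepOn U (G f) (Dep f.1))
    {Φ : ℝ≥0∞ → (ℕ → NNReal) → ℝ≥0∞} (hΦ : Measurable (Function.uncurry Φ)) :
    ∫⁻ ω, ∑' f : Gen n, Φ (G f ω) (U f.1.reverse ω) ∂μ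
      = ∫⁻ ω, ∑' f : Gen n, ∫⁻ u, Φ (G f ω) u ∂ν ∂μ := by
  have hGmeas : ∀ f, Measurable (G f) := fun f => (hG f).measurable hUmeas
  calc ∫⁻ ω, ∑' f : Gen n, Φ (G f ω) (U f.1.reverse ω) ∂μ
      = ∑' f : Gen n, ∫⁻ ω, Φ (G f ω) (U f.1.reverse ω) ∂μ :=
        lintegral_tsum fun f => (hΦ.comp ((hGmeas f).prodMk (hUmeas _))).aemeasurable
    _ = ∑' f : Gen n, ∫⁻ ω, ∫⁻ u, Φ (G f ω) u ∂ν ∂μ := by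
        refine tsum_congr fun f => ?_
        have hg : f.1.reverse ∉ Dep f.1 := fun h => by
          have := length_lt_of_mem_Dep h
          simp at this
        exact master hUmeas hUlaw hUindep hg (hG f) hΦ
    _ = ∫⁻ ω, ∑' f : Gen n, ∫⁻ u, Φ (G f ω) u ∂ν ∂μ :=
        (lintegral_tsum fun f =>
          ((Measurable.lintegral_prod_right hΦ).comp (hGmeas f)).aemeasurable).symm

lemma lintegral_Wm (hmean : ∫⁻ u, sig u ∂ν = 1) (n : ℕ) : ∫⁻ ω, Wm U n ω ∂μ = 1 := by
  induction n with
  | zero => simp [Wm_zero]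
  | succ n ih =>
    have hΦ : Measurable (Function.uncurry fun (l : ℝ≥0∞) (u : ℕ → NNReal) => l * sig u) :=
      measurable_fst.mul (measurable_sig.comp measurable_snd)
    calc ∫⁻ ω, Wm U (n + 1) ω ∂μ
        = ∫⁻ ω, ∑' f : Gen n, rvw U f.1 ω * sig (U f.1.reverse ω) ∂μ := by
          simp_rw [Wm_succ]
      _ = ∫⁻ ω, ∑' f : Gen n, ∫⁻ u, rvw U f.1 ω * sig u ∂ν ∂μ :=
          gen_step hUmeas hUlaw hUindep _ (fun f => rvw_depOn f.1) hΦ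
      _ = ∫⁻ ω, Wm U n ω ∂μ := by
          refine lintegral_congr fun ω => tsum_congr fun f => ?_
          rw [lintegral_const_mul _ measurable_sig, hmean, mul_one]
      _ = 1 := ih

lemma lintegral_Wpm (p : ℝ) (hp : 0 ≤ p) (n : ℕ) :
    ∫⁻ ω, Wpm U p n ω ∂μ = (∫⁻ u, ∑' i : ℕ, (u i : ℝ≥0∞) ^ p ∂ν) ^ n := by
  set mp := ∫⁻ u, ∑' i : ℕ, (u i : ℝ≥0∞) ^ p ∂ν with hmp
  have hmeas_sum : Measurable fun u : ℕ → NNReal => ∑' i : ℕ, (u i : ℝ≥0∞) ^ p :=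
    Measurable.ennreal_tsum fun i =>
      ((measurable_pi_apply i).coe_nnreal_ennreal).pow_const _
  induction n with
  | zero =>
    simp only [pow_zero]
    have : ∀ ω : Ω, Wpm U p 0 ω = 1 := fun ω => by
      rw [Wpm, tsum_eq_single (default : Gen 0)
        (fun b hb => absurd (Subsingleton.elim b default) hb)]
      show rvw U [] ω ^ p = 1
      simp [rvw]
    simp [this]
  | succ n ih =>
    have hΦ : Measurable (Function.uncurry fun (l : ℝ≥0∞) (u : ℕ → NNReal) =>
        l ^ p * ∑' i : ℕ, (u i : ℝ≥0∞) ^ p) :=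
      ((measurable_fst.pow_const _)).mul (hmeas_sum.comp measurable_snd)
    calc ∫⁻ ω, Wpm U p (n + 1) ω ∂μ
        = ∫⁻ ω, ∑' f : Gen n, rvw U f.1 ω ^ p
            * ∑' i : ℕ, (U f.1.reverse ω i : ℝ≥0∞) ^ p ∂μ := by
          simp_rw [Wpm_succ U p hp]
      _ = ∫⁻ ω, ∑' f : Gen n, ∫⁻ u, rvw U f.1 ω ^ p * ∑' i : ℕ, (u i : ℝ≥0∞) ^ p ∂ν ∂μ :=
          gen_step hUmeas hUlaw hUindep (fun f ω => rvw U f.1 ω)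
            (fun f => rvw_depOn f.1) hΦ
      _ = ∫⁻ ω, mp * Wpm U p n ω ∂μ := by
          refine lintegral_congr fun ω => ?_
          rw [Wpm, ← ENNReal.tsum_mul_left]
          refine tsum_congr fun f => ?_
          rw [lintegral_const_mul _ hmeas_sum, mul_comm]
      _ = mp * (∫⁻ ω, Wpm U p n ω ∂μ) := lintegral_const_mul _
            (Measurable.ennreal_tsum fun f => (measurable_rvw hUmeas f.1).pow_const _)
      _ = mp ^ (n + 1) := by rw [ih, pow_succ, mul_comm]

end Expectations

section Truncated

variable {μ : Measure Ω} [IsProbabilityMeasure μ] {ν : Measure (ℕ → NNReal)}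
  [IsProbabilityMeasure ν] {U : List ℕ → Ω → ℕ → NNReal}

/-- kept one-step mass -/
def phile (c : ℕ → ℝ≥0∞) (k : ℕ) (l : ℝ≥0∞) (u : ℕ → NNReal) : ℝ≥0∞ :=
  if l * sig u ≤ c k then l * sig u else 0

/-- lost one-step mass -/
def philoss (c : ℕ → ℝ≥0∞) (k : ℕ) (l : ℝ≥0∞) (u : ℕ → NNReal) : ℝ≥0∞ :=
  if l * sig u ≤ c k then 0 else l * sig u

/-- expected lost one-step mass -/
def lossInt (ν : Measure (ℕ → NNReal)) (c : ℕ → ℝ≥0∞) (k : ℕ) (l : ℝ≥0∞) : ℝ≥0∞ :=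
  ∫⁻ u, philoss c k l u ∂ν

/-- expected lost mass at generation `k` -/
def delta (μ : Measure Ω) (ν : Measure (ℕ → NNReal)) (U : List ℕ → Ω → ℕ → NNReal)
    (c : ℕ → ℝ≥0∞) (k : ℕ) : ℝ≥0∞ :=
  ∫⁻ ω, ∑' f : Gen k, lossInt ν c k (tvw U c f.1 ω) ∂μ

/-- tail mass of the offspring-sum distribution -/
def Gt (ν : Measure (ℕ → NNReal)) (r : ℝ≥0∞) : ℝ≥0∞ :=
  ∫⁻ u, (if sig u ≤ r then 0 else sig u) ∂ν

lemma measurable_phile_uncurry (c : ℕ → ℝ≥0∞) (k : ℕ) :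
    Measurable (Function.uncurry (phile c k)) := by
  refine Measurable.ite ?_ ?_ measurable_const
  · exact measurableSet_le (measurable_fst.mul (measurable_sig.comp measurable_snd))
      measurable_const
  · exact measurable_fst.mul (measurable_sig.comp measurable_snd)

lemma measurable_philoss_uncurry (c : ℕ → ℝ≥0∞) (k : ℕ) :
    Measurable (Function.uncurry (philoss c k)) := by
  refine Measurable.ite ?_ measurable_const ?_
  · exact measurableSet_le (measurable_fst.mul (measurable_sig.comp measurable_snd))
      measurable_const
  · exact measurable_fst.mul (measurable_sig.comp measurable_snd)

lemma phile_le_c (c : ℕ → ℝ≥0∞) (k : ℕ) (l : ℝ≥0∞) (u : ℕ → NNReal) :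
    phile c k l u ≤ c k := by
  rw [phile]; split
  · assumption
  · exact zero_le

lemma phile_add_philoss (c : ℕ → ℝ≥0∞) (k : ℕ) (l : ℝ≥0∞) (u : ℕ → NNReal) :
    phile c k l u + philoss c k l u = l * sig u := by
  rw [phile, philoss]; split <;> simp

lemma lintegral_phile_le (hmean : ∫⁻ u, sig u ∂ν = 1) (c : ℕ → ℝ≥0∞) (k : ℕ) (l : ℝ≥0∞) :
    ∫⁻ u, phile c k l u ∂ν ≤ l := by
  have h1 : ∫⁻ u, phile c k l u ∂ν ≤ ∫⁻ u, l * sig u ∂ν := by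
    refine lintegral_mono fun u => ?_
    rw [phile]; split
    · exact le_rfl
    · exact zero_le
  rwa [lintegral_const_mul _ measurable_sig, hmean, mul_one] at h1

variable (hUmeas : ∀ e, Measurable (U e)) (hUlaw : ∀ e, Measure.map (U e) μ = ν)
  (hUindep : iIndepFun U μ)
  (hmean : ∫⁻ u, sig u ∂ν = 1)

include hUmeas hUlaw hUindep hmean

/-- telescoping identity for the truncated masses -/
lemma TWm_telescope (c : ℕ → ℝ≥0∞) (k : ℕ) :
    ∫⁻ ω, TWm U c k ω ∂μ = (∫⁻ ω, TWm U c (k + 1) ω ∂μ) + delta μ ν U c k := by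
  have hΦfull : Measurable (Function.uncurry fun (l : ℝ≥0∞) (u : ℕ → NNReal) => l * sig u) :=
    measurable_fst.mul (measurable_sig.comp measurable_snd)
  have hdep : ∀ f : Gen k, DepOn U (fun ω => tvw U c f.1 ω) (Dep f.1) := fun f => tvw_depOn c f.1
  have h1 : ∫⁻ ω, TWm U c k ω ∂μ
      = ∫⁻ ω, ∑' f : Gen k, ∫⁻ u, tvw U c f.1 ω * sig u ∂ν ∂μ := by
    refine lintegral_congr fun ω => tsum_congr fun f => ?_
    rw [lintegral_const_mul _ measurable_sig, hmean, mul_one]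
  have hsplit : ∀ (l : ℝ≥0∞), ∫⁻ u, l * sig u ∂ν
      = (∫⁻ u, phile c k l u ∂ν) + lossInt ν c k l := by
    intro l
    rw [lossInt, ← lintegral_add_left]
    · exact lintegral_congr fun u => (phile_add_philoss c k l u).symm
    · exact (measurable_phile_uncurry c k).comp (measurable_const.prodMk measurable_id)
  have h3 : ∫⁻ ω, TWm U c (k + 1) ω ∂μ
      = ∫⁻ ω, ∑' f : Gen k, ∫⁻ u, phile c k (tvw U c f.1 ω) u ∂ν ∂μ := by
    have : ∫⁻ ω, TWm U c (k + 1) ω ∂μ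
        = ∫⁻ ω, ∑' f : Gen k, phile c k (tvw U c f.1 ω) (U f.1.reverse ω) ∂μ := by
      refine lintegral_congr fun ω => ?_
      rw [TWm_succ]
      rfl
    rw [this]
    exact gen_step hUmeas hUlaw hUindep _ hdep (measurable_phile_uncurry c k)
  rw [h1, h3, delta]
  rw [← lintegral_add_left]
  · refine lintegral_congr fun ω => ?_
    rw [← ENNReal.tsum_add]
    exact tsum_congr fun f => hsplit _
  · refine Measurable.ennreal_tsum fun f => ?_
    exact (Measurable.lintegral_prod_right (measurable_phile_uncurry c k)).comp
      (measurable_tvw hUmeas c f.1)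

lemma one_eq_TWm_add_delta (c : ℕ → ℝ≥0∞) (n : ℕ) :
    (1 : ℝ≥0∞) = (∫⁻ ω, TWm U c n ω ∂μ) + ∑ k ∈ Finset.range n, delta μ ν U c k := by
  induction n with
  | zero => simp [TWm_zero]
  | succ n ih =>
    rw [ih, TWm_telescope hUmeas hUlaw hUindep hmean c n, Finset.sum_range_succ]
    ring

end Truncated

section Bounds

variable {μ : Measure Ω} [IsProbabilityMeasure μ] {ν : Measure (ℕ → NNReal)}
  [IsProbabilityMeasure ν] {U : List ℕ → Ω → ℕ → NNReal}

/-- pointwise bound on the expected lost mass -/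
lemma lossInt_le (hmean : ∫⁻ u, sig u ∂ν = 1) {c : ℕ → ℝ≥0∞} {k : ℕ} {b r : ℝ≥0∞}
    (hb0 : b ≠ 0) (hbtop : b ≠ ⊤) (hbr : b * r = c k) {p : ℝ} (hp : 1 < p) (l : ℝ≥0∞) :
    lossInt ν c k l ≤ l * Gt ν r + l ^ p * b ^ (1 - p) := by
  by_cases hl : l ≤ b
  · have h1 : lossInt ν c k l ≤ l * Gt ν r := by
      rw [lossInt, Gt, ← lintegral_const_mul _ ?mG]
      case mG =>
        refine Measurable.ite ?_ measurable_const measurable_sig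
        exact measurableSet_le measurable_sig measurable_const
      refine lintegral_mono fun u => ?_
      rw [philoss]
      split
      · exact zero_le
      · rename_i hgt
        have hrs : ¬ (sig u ≤ r) := by
          intro hsr
          exact hgt (hbr ▸ (mul_le_mul' hl hsr))
        rw [if_neg hrs]
    exact h1.trans (le_add_right le_rfl)
  · have h1 : lossInt ν c k l ≤ l := by
      have : lossInt ν c k l ≤ ∫⁻ u, l * sig u ∂ν := by
        refine lintegral_mono fun u => ?_
        rw [philoss]
        split
        · exact zero_le
        · exact le_rfl
      rwa [lintegral_const_mul _ measurable_sig, hmean, mul_one] at this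
    have h2 : l ≤ l ^ p * b ^ (1 - p) := by
      rcases eq_or_ne l ⊤ with hltop | hltop
      · subst hltop
        rw [ENNReal.top_rpow_of_pos (by linarith)]
        have hbpos : (0 : ℝ≥0∞) < b ^ (1 - p) := by
          apply ENNReal.rpow_pos (lt_of_le_of_ne (zero_le) (Ne.symm hb0)) hbtop
        rw [ENNReal.top_mul hbpos.ne']
      · have hl0 : l ≠ 0 := by
          intro h0
          exact hl (h0 ▸ zero_le)
        have hb_le_l : b ≤ l := le_of_not_ge hl
        have hstep : l ^ (1 - p) ≤ b ^ (1 - p) := by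
          have hexp : (1 : ℝ) - p = -(p - 1) := by ring
          rw [hexp, ENNReal.rpow_neg, ENNReal.rpow_neg]
          exact ENNReal.inv_le_inv.mpr (ENNReal.rpow_le_rpow hb_le_l (by linarith))
        have hll : l ^ p * l ^ (1 - p) = l := by
          rw [← ENNReal.rpow_add _ _ hl0 hltop]
          simp
        calc l = l ^ p * l ^ (1 - p) := hll.symm
          _ ≤ l ^ p * b ^ (1 - p) := mul_le_mul_right hstep _
    exact le_add_left (h1.trans h2)

end Bounds

section Bounds2

variable {μ : Measure Ω} [IsProbabilityMeasure μ] {ν : Measure (ℕ → NNReal)}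
  [IsProbabilityMeasure ν] {U : List ℕ → Ω → ℕ → NNReal}
  (hUmeas : ∀ e, Measurable (U e)) (hUlaw : ∀ e, Measure.map (U e) μ = ν)
  (hUindep : iIndepFun U μ)
  (hmean : ∫⁻ u, sig u ∂ν = 1)

include hUmeas hUlaw hUindep hmean

lemma lintegral_TWm_le_one (c : ℕ → ℝ≥0∞) (n : ℕ) : ∫⁻ ω, TWm U c n ω ∂μ ≤ 1 := by
  rw [← lintegral_Wm hUmeas hUlaw hUindep hmean n]
  exact lintegral_mono fun ω => TWm_le_Wm U c n ω

lemma delta_le {c : ℕ → ℝ≥0∞} {k : ℕ} {b r : ℝ≥0∞} (hb0 : b ≠ 0) (hbtop : b ≠ ⊤)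
    (hbr : b * r = c k) {p : ℝ} (hp : 1 < p) :
    delta μ ν U c k ≤ Gt ν r + b ^ (1 - p) * (∫⁻ u, ∑' i : ℕ, (u i : ℝ≥0∞) ^ p ∂ν) ^ k := by
  have h1 : delta μ ν U c k
      ≤ ∫⁻ ω, (∑' f : Gen k, tvw U c f.1 ω * Gt ν r)
          + ∑' f : Gen k, tvw U c f.1 ω ^ p * b ^ (1 - p) ∂μ := by
    rw [delta]
    refine lintegral_mono fun ω => ?_
    rw [← ENNReal.tsum_add]
    exact ENNReal.tsum_le_tsum fun f => lossInt_le hmean hb0 hbtop hbr hp _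
  have h2 : ∫⁻ ω, (∑' f : Gen k, tvw U c f.1 ω * Gt ν r) ∂μ ≤ Gt ν r := by
    have : ∀ ω, (∑' f : Gen k, tvw U c f.1 ω * Gt ν r) = TWm U c k ω * Gt ν r := fun ω =>
      ENNReal.tsum_mul_right
    simp_rw [this]
    rw [lintegral_mul_const _ (measurable_TWm U hUmeas c k)]
    calc (∫⁻ ω, TWm U c k ω ∂μ) * Gt ν r
        ≤ 1 * Gt ν r := mul_le_mul_left
          (lintegral_TWm_le_one hUmeas hUlaw hUindep hmean c k) _
      _ = Gt ν r := one_mul _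
  have h3 : ∫⁻ ω, (∑' f : Gen k, tvw U c f.1 ω ^ p * b ^ (1 - p)) ∂μ
      ≤ b ^ (1 - p) * (∫⁻ u, ∑' i : ℕ, (u i : ℝ≥0∞) ^ p ∂ν) ^ k := by
    have hpt : ∀ ω, (∑' f : Gen k, tvw U c f.1 ω ^ p * b ^ (1 - p))
        ≤ b ^ (1 - p) * Wpm U p k ω := fun ω => by
      rw [Wpm, ← ENNReal.tsum_mul_left]
      refine ENNReal.tsum_le_tsum fun f => ?_
      rw [mul_comm]
      exact mul_le_mul_right (ENNReal.rpow_le_rpow (tvw_le_rvw U c f.1 ω) (by linarith)) _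
    calc ∫⁻ ω, (∑' f : Gen k, tvw U c f.1 ω ^ p * b ^ (1 - p)) ∂μ
        ≤ ∫⁻ ω, b ^ (1 - p) * Wpm U p k ω ∂μ := lintegral_mono hpt
      _ = b ^ (1 - p) * ∫⁻ ω, Wpm U p k ω ∂μ := lintegral_const_mul _
          (Measurable.ennreal_tsum fun f => (measurable_rvw hUmeas f.1).pow_const _)
      _ = b ^ (1 - p) * (∫⁻ u, ∑' i : ℕ, (u i : ℝ≥0∞) ^ p ∂ν) ^ k := by
          rw [lintegral_Wpm hUmeas hUlaw hUindep p (by linarith) k]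
  calc delta μ ν U c k ≤ _ := h1
    _ = (∫⁻ ω, (∑' f : Gen k, tvw U c f.1 ω * Gt ν r) ∂μ)
        + ∫⁻ ω, (∑' f : Gen k, tvw U c f.1 ω ^ p * b ^ (1 - p)) ∂μ := by
        refine lintegral_add_left ?_ _
        refine Measurable.ennreal_tsum fun f => ?_
        exact (measurable_tvw hUmeas c f.1).mul_const _
    _ ≤ Gt ν r + b ^ (1 - p) * (∫⁻ u, ∑' i : ℕ, (u i : ℝ≥0∞) ^ p ∂ν) ^ k := add_le_add h2 h3

omit hUmeas hUlaw hUindep hmean in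
lemma sq_expand {k : ℕ} (H : Gen k → ℝ≥0∞) :
    (∑' f : Gen k, H f) * (∑' f : Gen k, H f) = ∑' q : Gen k × Gen k, H q.1 * H q.2 := by
  rw [ENNReal.tsum_prod']
  have : ∀ f : Gen k, ∑' f' : Gen k, H f * H f' = H f * ∑' f' : Gen k, H f' := fun f =>
    ENNReal.tsum_mul_left
  simp_rw [this]
  exact ENNReal.tsum_mul_right.symm

lemma lintegral_phile_single (c : ℕ → ℝ≥0∞) {k : ℕ} (f : Gen k) :
    ∫⁻ ω, phile c k (tvw U c f.1 ω) (U f.1.reverse ω) ∂μ ≤ ∫⁻ ω, tvw U c f.1 ω ∂μ := by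
  have hg : f.1.reverse ∉ Dep f.1 := fun h => by
    have := length_lt_of_mem_Dep h
    simp at this
  rw [master hUmeas hUlaw hUindep hg (tvw_depOn c f.1) (measurable_phile_uncurry c k)]
  exact lintegral_mono fun ω => lintegral_phile_le hmean c k _

lemma pair_bound (c : ℕ → ℝ≥0∞) {k : ℕ} (f f' : Gen k) (hne : f ≠ f') :
    ∫⁻ ω, phile c k (tvw U c f.1 ω) (U f.1.reverse ω)
        * phile c k (tvw U c f'.1 ω) (U f'.1.reverse ω) ∂μ
      ≤ ∫⁻ ω, tvw U c f.1 ω * tvw U c f'.1 ω ∂μ := by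
  have hlen : ∀ g ∈ Dep f.1 ∪ Dep f'.1, g.length < k := by
    intro g hg
    rcases Finset.mem_union.mp hg with h | h
    · exact f.2 ▸ length_lt_of_mem_Dep h
    · exact f'.2 ▸ length_lt_of_mem_Dep h
  have hrevne : f'.1.reverse ≠ f.1.reverse := by
    intro h
    exact hne (Subtype.ext (List.reverse_injective h)).symm
  have hg1 : f'.1.reverse ∉ insert f.1.reverse (Dep f.1 ∪ Dep f'.1) := by
    intro h
    rcases Finset.mem_insert.mp h with h | h
    · exact hrevne h
    · have := hlen _ h
      simp [f'.2] at this
  have hg2 : f.1.reverse ∉ Dep f.1 ∪ Dep f'.1 := by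
    intro h
    have := hlen _ h
    simp [f.2] at this
  have hdepF2 : DepOn U (fun ω => (tvw U c f.1 ω, tvw U c f'.1 ω)) (Dep f.1 ∪ Dep f'.1) :=
    DepOn.prod_mk ((tvw_depOn c f.1).mono Finset.subset_union_left)
      ((tvw_depOn c f'.1).mono Finset.subset_union_right)
  have hdepF1 : DepOn U (fun ω => ((tvw U c f.1 ω, tvw U c f'.1 ω), U f.1.reverse ω))
      (insert f.1.reverse (Dep f.1 ∪ Dep f'.1)) := by
    refine DepOn.prod_mk (hdepF2.mono (Finset.subset_insert _ _)) ?_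
    refine (DepOn.coord f.1.reverse).mono ?_
    intro x hx
    rw [Finset.mem_singleton] at hx
    exact hx ▸ Finset.mem_insert_self _ _
  have hΦ1 : Measurable (Function.uncurry
      fun (q : (ℝ≥0∞ × ℝ≥0∞) × (ℕ → NNReal)) (u' : ℕ → NNReal) =>
        phile c k q.1.1 q.2 * phile c k q.1.2 u') := by
    apply Measurable.mul
    · exact (measurable_phile_uncurry c k).comp
        ((measurable_fst.fst.fst).prodMk measurable_fst.snd)
    · exact (measurable_phile_uncurry c k).comp
        ((measurable_fst.fst.snd).prodMk measurable_snd)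
  have hΦ2 : Measurable (Function.uncurry
      fun (q : ℝ≥0∞ × ℝ≥0∞) (u : ℕ → NNReal) => phile c k q.1 u * q.2) := by
    apply Measurable.mul
    · exact (measurable_phile_uncurry c k).comp ((measurable_fst.fst).prodMk measurable_snd)
    · exact measurable_fst.snd
  calc ∫⁻ ω, phile c k (tvw U c f.1 ω) (U f.1.reverse ω)
          * phile c k (tvw U c f'.1 ω) (U f'.1.reverse ω) ∂μ
      = ∫⁻ ω, ∫⁻ u', phile c k (tvw U c f.1 ω) (U f.1.reverse ω)
          * phile c k (tvw U c f'.1 ω) u' ∂ν ∂μ :=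
        master hUmeas hUlaw hUindep hg1 hdepF1 hΦ1
    _ ≤ ∫⁻ ω, phile c k (tvw U c f.1 ω) (U f.1.reverse ω) * tvw U c f'.1 ω ∂μ := by
        refine lintegral_mono fun ω => ?_
        rw [lintegral_const_mul]
        · exact mul_le_mul_right (lintegral_phile_le hmean c k _) _
        · exact (measurable_phile_uncurry c k).comp (measurable_const.prodMk measurable_id)
    _ = ∫⁻ ω, ∫⁻ u, phile c k (tvw U c f.1 ω) u * tvw U c f'.1 ω ∂ν ∂μ :=
        master hUmeas hUlaw hUindep hg2 hdepF2 hΦ2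
    _ ≤ ∫⁻ ω, tvw U c f.1 ω * tvw U c f'.1 ω ∂μ := by
        refine lintegral_mono fun ω => ?_
        rw [lintegral_mul_const]
        · exact mul_le_mul_left (lintegral_phile_le hmean c k _) _
        · exact (measurable_phile_uncurry c k).comp (measurable_const.prodMk measurable_id)



lemma TWm_sq_succ_le (c : ℕ → ℝ≥0∞) (k : ℕ) :
    ∫⁻ ω, TWm U c (k + 1) ω * TWm U c (k + 1) ω ∂μ
      ≤ (∫⁻ ω, TWm U c k ω * TWm U c k ω ∂μ) + c k := by
  classical
  set X : Gen k → Ω → ℝ≥0∞ := fun f ω => phile c k (tvw U c f.1 ω) (U f.1.reverse ω) with hX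
  have hXmeas : ∀ f, Measurable (X f) := fun f =>
    (measurable_phile_uncurry c k).comp
      ((measurable_tvw hUmeas c f.1).prodMk (hUmeas _))
  have hTsucc : ∀ ω, TWm U c (k + 1) ω = ∑' f : Gen k, X f ω := fun ω => by
    rw [TWm_succ]
    rfl
  have htvmeas : ∀ f : Gen k, Measurable (fun ω => tvw U c f.1 ω) := fun f =>
    measurable_tvw hUmeas c f.1
  have step1 : ∫⁻ ω, TWm U c (k + 1) ω * TWm U c (k + 1) ω ∂μ
      = ∑' q : Gen k × Gen k, ∫⁻ ω, X q.1 ω * X q.2 ω ∂μ := by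
    have : ∀ ω, TWm U c (k + 1) ω * TWm U c (k + 1) ω
        = ∑' q : Gen k × Gen k, X q.1 ω * X q.2 ω := fun ω => by
      rw [hTsucc ω]
      exact sq_expand fun f => X f ω
    simp_rw [this]
    exact lintegral_tsum fun q => ((hXmeas q.1).mul (hXmeas q.2)).aemeasurable
  have step2 : ∀ q : Gen k × Gen k, ∫⁻ ω, X q.1 ω * X q.2 ω ∂μ
      ≤ (∫⁻ ω, tvw U c q.1.1 ω * tvw U c q.2.1 ω ∂μ)
        + (if q.1 = q.2 then c k * ∫⁻ ω, tvw U c q.1.1 ω ∂μ else 0) := by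
    rintro ⟨f, f'⟩
    by_cases hq : f = f'
    · subst hq
      simp only [if_pos rfl]
      have h1 : ∫⁻ ω, X f ω * X f ω ∂μ ≤ c k * ∫⁻ ω, X f ω ∂μ := by
        rw [← lintegral_const_mul _ (hXmeas f)]
        exact lintegral_mono fun ω => mul_le_mul_left (phile_le_c c k _ _) _
      have h2 : c k * ∫⁻ ω, X f ω ∂μ ≤ c k * ∫⁻ ω, tvw U c f.1 ω ∂μ :=
        mul_le_mul_right (lintegral_phile_single hUmeas hUlaw hUindep hmean c f) _
      exact le_add_left (h1.trans h2)
    · simp only [if_neg hq, add_zero]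
      exact pair_bound hUmeas hUlaw hUindep hmean c f f' hq
  have step3 : ∑' q : Gen k × Gen k, ∫⁻ ω, tvw U c q.1.1 ω * tvw U c q.2.1 ω ∂μ
      = ∫⁻ ω, TWm U c k ω * TWm U c k ω ∂μ := by
    have e1 : ∫⁻ ω, ∑' q : Gen k × Gen k, tvw U c q.1.1 ω * tvw U c q.2.1 ω ∂μ
        = ∑' q : Gen k × Gen k, ∫⁻ ω, tvw U c q.1.1 ω * tvw U c q.2.1 ω ∂μ :=
      lintegral_tsum fun q => ((htvmeas q.1).mul (htvmeas q.2)).aemeasurable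
    rw [← e1]
    refine lintegral_congr fun ω => ?_
    rw [TWm, sq_expand fun f => tvw U c f.1 ω]
  have step4 : ∑' q : Gen k × Gen k,
      (if q.1 = q.2 then c k * ∫⁻ ω, tvw U c q.1.1 ω ∂μ else 0) ≤ c k := by
    rw [ENNReal.tsum_prod']
    have hinner : ∀ f : Gen k, ∑' f' : Gen k,
        (if f = f' then c k * ∫⁻ ω, tvw U c f.1 ω ∂μ else 0)
        = c k * ∫⁻ ω, tvw U c f.1 ω ∂μ := fun f => by
      simp_rw [eq_comm (a := f)]
      exact tsum_ite_eq f _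
    simp_rw [hinner]
    rw [ENNReal.tsum_mul_left, ← lintegral_tsum fun f => (htvmeas f).aemeasurable]
    calc c k * ∫⁻ ω, ∑' f : Gen k, tvw U c f.1 ω ∂μ
        = c k * ∫⁻ ω, TWm U c k ω ∂μ := rfl
      _ ≤ c k * 1 := mul_le_mul_right
          (lintegral_TWm_le_one hUmeas hUlaw hUindep hmean c k) _
      _ = c k := mul_one _
  calc ∫⁻ ω, TWm U c (k + 1) ω * TWm U c (k + 1) ω ∂μ
      = ∑' q : Gen k × Gen k, ∫⁻ ω, X q.1 ω * X q.2 ω ∂μ := step1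
    _ ≤ ∑' q : Gen k × Gen k, ((∫⁻ ω, tvw U c q.1.1 ω * tvw U c q.2.1 ω ∂μ)
        + (if q.1 = q.2 then c k * ∫⁻ ω, tvw U c q.1.1 ω ∂μ else 0)) :=
        ENNReal.tsum_le_tsum step2
    _ = (∑' q : Gen k × Gen k, ∫⁻ ω, tvw U c q.1.1 ω * tvw U c q.2.1 ω ∂μ)
        + ∑' q : Gen k × Gen k, (if q.1 = q.2 then c k * ∫⁻ ω, tvw U c q.1.1 ω ∂μ else 0) :=
        ENNReal.tsum_add
    _ ≤ (∫⁻ ω, TWm U c k ω * TWm U c k ω ∂μ) + c k := by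
        rw [step3]
        exact add_le_add le_rfl step4

lemma TWm_sq_le (c : ℕ → ℝ≥0∞) (n : ℕ) :
    ∫⁻ ω, TWm U c n ω * TWm U c n ω ∂μ ≤ 1 + ∑ k ∈ Finset.range n, c k := by
  induction n with
  | zero => simp [TWm_zero]
  | succ n ih =>
    calc ∫⁻ ω, TWm U c (n + 1) ω * TWm U c (n + 1) ω ∂μ
        ≤ (∫⁻ ω, TWm U c n ω * TWm U c n ω ∂μ) + c n :=
          TWm_sq_succ_le hUmeas hUlaw hUindep hmean c n
      _ ≤ 1 + (∑ k ∈ Finset.range n, c k) + c n := add_le_add ih le_rfl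
      _ = 1 + ∑ k ∈ Finset.range (n + 1), c k := by
          rw [Finset.sum_range_succ, add_assoc]



lemma lintegral_sub_TWm (c : ℕ → ℝ≥0∞) (n : ℕ) :
    ∫⁻ ω, Wm U n ω - TWm U c n ω ∂μ ≤ ∑' k : ℕ, delta μ ν U c k := by
  have hfin : ∫⁻ ω, TWm U c n ω ∂μ ≠ ⊤ :=
    ((lintegral_TWm_le_one hUmeas hUlaw hUindep hmean c n).trans_lt ENNReal.one_lt_top).ne
  have hsub : ∫⁻ ω, Wm U n ω - TWm U c n ω ∂μ
      = (∫⁻ ω, Wm U n ω ∂μ) - ∫⁻ ω, TWm U c n ω ∂μ :=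
    lintegral_sub' (measurable_TWm U hUmeas c n).aemeasurable hfin
      (Filter.Eventually.of_forall fun ω => TWm_le_Wm U c n ω)
  rw [hsub, lintegral_Wm hUmeas hUlaw hUindep hmean n]
  have h1 : (1 : ℝ≥0∞) - (∫⁻ ω, TWm U c n ω ∂μ) = ∑ k ∈ Finset.range n, delta μ ν U c k := by
    refine ENNReal.sub_eq_of_eq_add hfin ?_
    rw [add_comm]
    exact one_eq_TWm_add_delta hUmeas hUlaw hUindep hmean c n
  rw [h1]
  exact ENNReal.sum_le_tsum _

lemma tail_bound (c : ℕ → ℝ≥0∞) {n : ℕ} {C : ℝ≥0∞} (hC0 : C ≠ 0) (hCtop : C ≠ ⊤) :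
    ∫⁻ ω, Set.indicator {ω' | C ≤ Wm U n ω'} (Wm U n) ω ∂μ
      ≤ (∑' k : ℕ, delta μ ν U c k)
        + ((1 + ∑' k : ℕ, c k) * C⁻¹) ^ (1/2 : ℝ) := by
  classical
  set A : Set Ω := {ω' | C ≤ Wm U n ω'} with hA
  have hAmeas : MeasurableSet A := measurableSet_le measurable_const (measurable_Wm U hUmeas n)
  have hμA : μ A ≤ C⁻¹ := by
    have := meas_ge_le_lintegral_div (μ := μ) (measurable_Wm U hUmeas n).aemeasurable (ε := C) hC0 hCtop
    rw [lintegral_Wm hUmeas hUlaw hUindep hmean n] at this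
    simpa [hA, one_div, ENNReal.div_eq_inv_mul] using this
  have hpt : ∀ ω, Set.indicator A (Wm U n) ω
      ≤ (Wm U n ω - TWm U c n ω) + Set.indicator A (TWm U c n) ω := by
    intro ω
    by_cases hω : ω ∈ A
    · rw [Set.indicator_of_mem hω, Set.indicator_of_mem hω]
      exact le_tsub_add
    · rw [Set.indicator_of_notMem hω, Set.indicator_of_notMem hω]
      simp
  have hCS : ∫⁻ ω, Set.indicator A (TWm U c n) ω ∂μ
      ≤ ((1 + ∑' k : ℕ, c k) * C⁻¹) ^ (1/2 : ℝ) := by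
    have hind : ∀ ω, Set.indicator A (TWm U c n) ω
        = (TWm U c n * Set.indicator A (fun _ => (1:ℝ≥0∞))) ω := fun ω => by
      by_cases hω : ω ∈ A <;>
        simp [Set.indicator_of_mem, Set.indicator_of_notMem, hω]
    have h2 : Real.HolderConjugate 2 2 := by constructor <;> norm_num
    have hcs := ENNReal.lintegral_mul_le_Lp_mul_Lq μ h2
      (f := TWm U c n) (g := Set.indicator A (fun _ => (1:ℝ≥0∞)))
      (measurable_TWm U hUmeas c n).aemeasurable
      (Measurable.aemeasurable (measurable_const.indicator hAmeas))
    simp_rw [← hind] at hcs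
    have hsq : ∫⁻ ω, TWm U c n ω ^ (2:ℝ) ∂μ ≤ 1 + ∑' k : ℕ, c k := by
      have : ∀ ω, TWm U c n ω ^ (2:ℝ) = TWm U c n ω * TWm U c n ω := fun ω => by
        rw [show (2:ℝ) = ((2:ℕ):ℝ) by norm_num, ENNReal.rpow_natCast, sq]
      simp_rw [this]
      exact (TWm_sq_le hUmeas hUlaw hUindep hmean c n).trans
        (add_le_add le_rfl (ENNReal.sum_le_tsum _))
    have hindsq : ∫⁻ ω, (Set.indicator A (fun _ => (1:ℝ≥0∞)) ω) ^ (2:ℝ) ∂μ ≤ C⁻¹ := by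
      have : ∀ ω, (Set.indicator A (fun _ => (1:ℝ≥0∞)) ω) ^ (2:ℝ)
          = Set.indicator A (fun _ => (1:ℝ≥0∞)) ω := fun ω => by
        by_cases hω : ω ∈ A <;>
          simp [Set.indicator_of_mem, Set.indicator_of_notMem, hω, ENNReal.rpow_two]
      simp_rw [this]
      calc ∫⁻ ω, Set.indicator A (fun _ => (1:ℝ≥0∞)) ω ∂μ = μ A :=
            lintegral_indicator_one hAmeas
        _ ≤ C⁻¹ := hμA
    calc ∫⁻ ω, Set.indicator A (TWm U c n) ω ∂μ
        ≤ (∫⁻ ω, TWm U c n ω ^ (2:ℝ) ∂μ) ^ (1/(2:ℝ))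
          * (∫⁻ ω, (Set.indicator A (fun _ => (1:ℝ≥0∞)) ω) ^ (2:ℝ) ∂μ) ^ (1/(2:ℝ)) := hcs
      _ ≤ (1 + ∑' k : ℕ, c k) ^ (1/(2:ℝ)) * (C⁻¹) ^ (1/(2:ℝ)) :=
          mul_le_mul' (ENNReal.rpow_le_rpow hsq (by norm_num))
            (ENNReal.rpow_le_rpow hindsq (by norm_num))
      _ = ((1 + ∑' k : ℕ, c k) * C⁻¹) ^ (1/2 : ℝ) :=
          (ENNReal.mul_rpow_of_nonneg _ _ (by norm_num)).symm
  calc ∫⁻ ω, Set.indicator A (Wm U n) ω ∂μ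
      ≤ ∫⁻ ω, (Wm U n ω - TWm U c n ω) + Set.indicator A (TWm U c n) ω ∂μ :=
        lintegral_mono hpt
    _ = (∫⁻ ω, Wm U n ω - TWm U c n ω ∂μ) + ∫⁻ ω, Set.indicator A (TWm U c n) ω ∂μ :=
        lintegral_add_left ((measurable_Wm U hUmeas n).sub (measurable_TWm U hUmeas c n)) _
    _ ≤ (∑' k : ℕ, delta μ ν U c k) + ((1 + ∑' k : ℕ, c k) * C⁻¹) ^ (1/2 : ℝ) :=
        add_le_add (lintegral_sub_TWm hUmeas hUlaw hUindep hmean c n) hCS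

end Bounds2

section Analytic

variable {ν : Measure (ℕ → NNReal)} [IsProbabilityMeasure ν]

/-- dominating function for the sum of tail masses -/
def Hfun (ρ B : ℝ) (x : ℝ≥0∞) : ℝ≥0∞ :=
  if x ≤ ENNReal.ofReal B then 0
  else x * (ENNReal.ofReal (Real.log x.toReal * (Real.log ρ)⁻¹) + 1)

lemma measurable_Hfun (ρ B : ℝ) : Measurable (Hfun ρ B) := by
  refine Measurable.ite (measurableSet_le measurable_id measurable_const) measurable_const ?_
  refine measurable_id.mul (Measurable.add_const ?_ 1)
  exact ENNReal.measurable_ofReal.comp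
    ((Real.measurable_log.comp ENNReal.measurable_toReal).mul_const _)

lemma Hfun_anti {ρ B B' : ℝ} (hBB' : B ≤ B') (x : ℝ≥0∞) : Hfun ρ B' x ≤ Hfun ρ B x := by
  rw [Hfun, Hfun]
  by_cases h : x ≤ ENNReal.ofReal B
  · rw [if_pos (h.trans (ENNReal.ofReal_le_ofReal hBB'))]
    exact zero_le
  · rw [if_neg h]
    split
    · exact zero_le
    · exact le_rfl

/-- counting bound for the sum of the truncation tails -/
lemma tsum_tail_le {ρ B : ℝ} (hρ : 1 < ρ) (hB : 1 ≤ B) {x : ℝ≥0∞} (hx : x ≠ ⊤) :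
    ∑' k : ℕ, (if x ≤ ENNReal.ofReal (B * ρ ^ k) then 0 else x) ≤ Hfun ρ B x := by
  classical
  have hρ0 : (0 : ℝ) < ρ := by linarith
  have hlogρ : 0 < Real.log ρ := Real.log_pos hρ
  by_cases hxB : x ≤ ENNReal.ofReal B
  · have hz : ∀ k : ℕ, (if x ≤ ENNReal.ofReal (B * ρ ^ k) then (0:ℝ≥0∞) else x) = 0 := by
      intro k
      have h1 : B ≤ B * ρ ^ k := by
        nlinarith [one_le_pow₀ hρ.le (n := k), pow_pos hρ0 k]
      exact if_pos (hxB.trans (ENNReal.ofReal_le_ofReal h1))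
    rw [tsum_congr hz, tsum_zero, Hfun, if_pos hxB]
  · set y := x.toReal with hy
    have hBy : B < y := by
      rw [hy]
      exact (ENNReal.ofReal_lt_iff_lt_toReal (by linarith) hx).mp (lt_of_not_ge hxB)
    have hy1 : 1 < y := lt_of_le_of_lt hB hBy
    have hy0 : 0 < y := by linarith
    set z := Real.log y / Real.log ρ with hzdef
    have hz0 : 0 ≤ z := div_nonneg (Real.log_nonneg hy1.le) hlogρ.le
    set K := ⌊z⌋₊ + 1 with hK
    have hvanish : ∀ k, k ∉ Finset.range K →
        (if x ≤ ENNReal.ofReal (B * ρ ^ k) then (0:ℝ≥0∞) else x) = 0 := by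
      intro k hk
      rw [Finset.mem_range, not_lt] at hk
      have hzk : z < (k : ℝ) := lt_of_lt_of_le (Nat.lt_floor_add_one z) (by exact_mod_cast hk)
      have hlog : Real.log y < (k : ℝ) * Real.log ρ := by
        rw [hzdef, div_lt_iff₀ hlogρ] at hzk
        exact hzk
      have hyρ : y < ρ ^ k := by
        have h2 : Real.log y < Real.log (ρ ^ k) := by rwa [Real.log_pow]
        exact (Real.log_lt_log_iff hy0 (pow_pos hρ0 k)).mp h2
      have hyB : y ≤ B * ρ ^ k := by nlinarith [pow_pos hρ0 k]
      refine if_pos ?_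
      calc x = ENNReal.ofReal y := (ENNReal.ofReal_toReal hx).symm
        _ ≤ ENNReal.ofReal (B * ρ ^ k) := ENNReal.ofReal_le_ofReal hyB
    rw [tsum_eq_sum hvanish]
    have hterm : ∀ k ∈ Finset.range K,
        (if x ≤ ENNReal.ofReal (B * ρ ^ k) then (0:ℝ≥0∞) else x) ≤ x := by
      intro k _
      split
      · exact zero_le
      · exact le_rfl
    calc ∑ k ∈ Finset.range K, (if x ≤ ENNReal.ofReal (B * ρ ^ k) then (0:ℝ≥0∞) else x)
        ≤ ∑ _k ∈ Finset.range K, x := Finset.sum_le_sum hterm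
      _ = (K : ℝ≥0∞) * x := by rw [Finset.sum_const, Finset.card_range, nsmul_eq_mul]
      _ ≤ (ENNReal.ofReal (Real.log y * (Real.log ρ)⁻¹) + 1) * x := by
          refine mul_le_mul_left ?_ x
          have h1 : ((K : ℕ) : ℝ≥0∞) = ((⌊z⌋₊ : ℕ) : ℝ≥0∞) + 1 := by
            rw [hK]; push_cast; ring
          rw [h1]
          refine add_le_add ?_ le_rfl
          calc ((⌊z⌋₊ : ℕ) : ℝ≥0∞) = ENNReal.ofReal (⌊z⌋₊ : ℝ) := by
                rw [ENNReal.ofReal_natCast]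
            _ ≤ ENNReal.ofReal z := ENNReal.ofReal_le_ofReal (Nat.floor_le hz0)
            _ = ENNReal.ofReal (Real.log y * (Real.log ρ)⁻¹) := by
                simp only [hzdef, div_eq_mul_inv]
      _ = Hfun ρ B x := by
          rw [Hfun, if_neg hxB, mul_comm]

/-- the sum of the expected truncation tails is dominated -/
lemma tsum_Gt_le {ρ B : ℝ} (hρ : 1 < ρ) (hB : 1 ≤ B)
    (hfin : ∀ᵐ u ∂ν, sig u ≠ ⊤) :
    ∑' k : ℕ, Gt ν (ENNReal.ofReal (B * ρ ^ k)) ≤ ∫⁻ u, Hfun ρ B (sig u) ∂ν := by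
  have hswap : ∑' k : ℕ, Gt ν (ENNReal.ofReal (B * ρ ^ k))
      = ∫⁻ u, ∑' k : ℕ, (if sig u ≤ ENNReal.ofReal (B * ρ ^ k) then 0 else sig u) ∂ν := by
    simp only [Gt]
    exact (lintegral_tsum fun k => (Measurable.ite
      (measurableSet_le measurable_sig measurable_const) measurable_const
      measurable_sig).aemeasurable).symm
  rw [hswap]
  refine lintegral_mono_ae ?_
  filter_upwards [hfin] with u hu
  exact tsum_tail_le hρ hB hu

/-- choice of the truncation base making the tail sum small -/
lemma exists_base (hmean : ∫⁻ u, sig u ∂ν = 1)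
    (hL : ∫⁻ u, sig u * ENNReal.ofReal (Real.log (sig u).toReal) ∂ν ≠ ⊤)
    {ρ : ℝ} (hρ : 1 < ρ) {ε : ℝ≥0∞} (hε : 0 < ε) :
    ∃ N : ℕ, 1 ≤ (N:ℝ) ∧ ∫⁻ u, Hfun ρ N (sig u) ∂ν < ε := by
  have hfin : ∀ᵐ u ∂ν, sig u ≠ ⊤ := by
    have := ae_lt_top measurable_sig (hmean ▸ ENNReal.one_ne_top)
    filter_upwards [this] with u hu using hu.ne
  set F : ℕ → (ℕ → NNReal) → ℝ≥0∞ := fun n u => Hfun ρ ((n : ℝ) + 1) (sig u) with hF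
  have hFmeas : ∀ n, Measurable (F n) := fun n => (measurable_Hfun _ _).comp measurable_sig
  have hFanti : Antitone F := by
    intro n n' hnn' u
    refine Hfun_anti ?_ _
    have : (n : ℝ) ≤ (n' : ℝ) := by exact_mod_cast hnn'
    linarith
  have hF0 : ∫⁻ u, F 0 u ∂ν ≠ ⊤ := by
    refine ne_top_of_le_ne_top (b := (∫⁻ u, sig u * ENNReal.ofReal (Real.log (sig u).toReal) ∂ν)
      * ENNReal.ofReal (Real.log ρ)⁻¹ + 1) ?_ ?_
    · exact ENNReal.add_ne_top.mpr ⟨ENNReal.mul_ne_top hL ENNReal.ofReal_ne_top,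
        ENNReal.one_ne_top⟩
    · have hpt : ∀ u, F 0 u ≤ sig u * ENNReal.ofReal (Real.log (sig u).toReal)
          * ENNReal.ofReal (Real.log ρ)⁻¹ + sig u := by
        intro u
        rw [hF]
        simp only [Nat.cast_zero, zero_add]
        rw [Hfun]
        split
        · exact zero_le
        · rename_i hgt
          rcases eq_or_ne (sig u) ⊤ with htop | htop
          · rw [htop]
            simp
          · have h1 : (1:ℝ) ≤ (sig u).toReal := by
              have := (ENNReal.ofReal_lt_iff_lt_toReal (by norm_num) htop).mp
                (lt_of_not_ge hgt)
              linarith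
            have hlognn : 0 ≤ Real.log (sig u).toReal := Real.log_nonneg h1
            rw [ENNReal.ofReal_mul hlognn, mul_add, mul_one, mul_assoc]
      calc ∫⁻ u, F 0 u ∂ν
          ≤ ∫⁻ u, sig u * ENNReal.ofReal (Real.log (sig u).toReal)
              * ENNReal.ofReal (Real.log ρ)⁻¹ + sig u ∂ν := lintegral_mono hpt
        _ = (∫⁻ u, sig u * ENNReal.ofReal (Real.log (sig u).toReal) ∂ν)
              * ENNReal.ofReal (Real.log ρ)⁻¹ + 1 := by
            rw [lintegral_add_right _ measurable_sig, hmean, lintegral_mul_const]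
            exact (measurable_sig.mul (ENNReal.measurable_ofReal.comp
              (Real.measurable_log.comp (ENNReal.measurable_toReal.comp measurable_sig))))
  have hiInf : ∫⁻ u, ⨅ n, F n u ∂ν = ⨅ n, ∫⁻ u, F n u ∂ν := lintegral_iInf hFmeas hFanti hF0
  have hzero : ∫⁻ u, ⨅ n, F n u ∂ν = 0 := by
    have hae : ∀ᵐ u ∂ν, ⨅ n, F n u = 0 := by
      filter_upwards [hfin] with u hu
      refine le_antisymm ?_ (zero_le)
      obtain ⟨n, hn⟩ := exists_nat_ge (sig u).toReal
      refine (iInf_le (fun n => F n u) n).trans ?_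
      rw [hF]
      have hle : sig u ≤ ENNReal.ofReal ((n:ℝ) + 1) := by
        calc sig u = ENNReal.ofReal (sig u).toReal := (ENNReal.ofReal_toReal hu).symm
          _ ≤ ENNReal.ofReal ((n:ℝ) + 1) := ENNReal.ofReal_le_ofReal (by linarith)
      simp only [Hfun]
      rw [if_pos hle]
    calc ∫⁻ u, ⨅ n, F n u ∂ν = ∫⁻ _u, 0 ∂ν := lintegral_congr_ae hae
      _ = 0 := lintegral_zero
  have hlt : ⨅ n, ∫⁻ u, F n u ∂ν < ε := by
    rw [← hiInf, hzero]; exact hε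
  obtain ⟨n, hn⟩ := iInf_lt_iff.mp hlt
  refine ⟨n + 1, by exact_mod_cast Nat.succ_le_succ (Nat.zero_le n), ?_⟩
  have hcast : ((n + 1 : ℕ) : ℝ) = (n : ℝ) + 1 := by push_cast; ring
  rw [hcast]
  exact hn

end Analytic

end MandelbrotAux

section Link

variable {Ω : Type*} {mΩ : MeasurableSpace Ω}

lemma cascadeWeight_concat (U : List ℕ → Ω → ℕ → NNReal) (e : List ℕ) (i : ℕ) (ω : Ω) :
    cascadeWeight U (e ++ [i]) ω = cascadeWeight U e ω * U e ω i := by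
  rw [cascadeWeight, cascadeWeight]
  have hlen : (e ++ [i]).length = e.length + 1 := by simp
  rw [hlen, Finset.prod_range_succ]
  congr 1
  · refine Finset.prod_congr rfl fun k hk => ?_
    rw [Finset.mem_range] at hk
    rw [List.take_append_of_le_length hk.le, List.getD_append _ _ _ _ hk]
  · rw [List.take_left, List.getD_append_right _ _ _ _ le_rfl]
    simp

lemma rvw_eq_cascadeWeight (U : List ℕ → Ω → ℕ → NNReal) (f : List ℕ) (ω : Ω) :
    MandelbrotAux.rvw U f ω = (cascadeWeight U f.reverse ω : ℝ≥0∞) := by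
  induction f with
  | nil =>
    simp [MandelbrotAux.rvw, cascadeWeight]
  | cons i f ih =>
    simp only [MandelbrotAux.rvw, ih, List.reverse_cons, cascadeWeight_concat]
    rw [ENNReal.coe_mul]

/-- reversal equivalence on a generation -/
def revGen (n : ℕ) : MandelbrotAux.Gen n ≃ MandelbrotAux.Gen n where
  toFun := fun f => ⟨f.1.reverse, by simp [f.2]⟩
  invFun := fun f => ⟨f.1.reverse, by simp [f.2]⟩
  left_inv := fun f => Subtype.ext (by simp)
  right_inv := fun f => Subtype.ext (by simp)

lemma cascadeMass_eq_Wm (U : List ℕ → Ω → ℕ → NNReal) (n : ℕ) (ω : Ω) :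
    cascadeMass U n ω = MandelbrotAux.Wm U n ω := by
  rw [cascadeMass, MandelbrotAux.Wm]
  calc ∑' l : {l : List ℕ // l.length = n}, (cascadeWeight U (l : List ℕ) ω : ℝ≥0∞)
      = ∑' f : MandelbrotAux.Gen n, (cascadeWeight U ((revGen n) f).1 ω : ℝ≥0∞) :=
        (Equiv.tsum_eq (revGen n) _).symm
    _ = ∑' f : MandelbrotAux.Gen n, MandelbrotAux.rvw U f.1 ω :=
        tsum_congr fun f => (rvw_eq_cascadeWeight U f.1 ω).symm

end Link

open MandelbrotAux

/-- under an `L log L` moment and `E[∑ u_i^p] < 1` for some `p ∈ (1,2]`,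
the Mandelbrot-cascade martingale `(W_n)` is uniformly integrable
(second Proposition of Section 4.1). -/
theorem mandelbrot_cascade_uniformly_integrable
    {Ω : Type*} {mΩ : MeasurableSpace Ω} (μ : Measure Ω) [IsProbabilityMeasure μ]
    (ν : Measure (ℕ → NNReal)) [IsProbabilityMeasure ν]
    (U : List ℕ → Ω → ℕ → NNReal)
    (hUmeas : ∀ e, Measurable (U e))
    (hUlaw : ∀ e, Measure.map (U e) μ = ν)
    (hUindep : iIndepFun U μ)
    (hmean : ∫⁻ u, ∑' i : ℕ, (u i : ENNReal) ∂ν = 1)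
    (hLlogL : ∃ p : ℝ, 1 < p ∧ p ≤ 2 ∧
      (∫⁻ u, (∑' i : ℕ, (u i : ENNReal))
          * ENNReal.ofReal (Real.log (∑' i : ℕ, (u i : ENNReal)).toReal) ∂ν < ⊤) ∧
      ∫⁻ u, ∑' i : ℕ, (u i : ENNReal) ^ p ∂ν < 1) :
    UniformIntegrable (fun n ω => (cascadeMass U n ω).toReal) 1 μ := by
  classical
  obtain ⟨p, hp1, hp2, hLlog, hmp⟩ := hLlogL
  have hmean' : ∫⁻ u, sig u ∂ν = 1 := hmean
  have hLlog' : ∫⁻ u, sig u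
      * ENNReal.ofReal (Real.log (sig u).toReal) ∂ν ≠ ⊤ := hLlog.ne
  have hfin : ∀ᵐ u ∂ν, sig u ≠ ⊤ := by
    have := ae_lt_top measurable_sig (hmean' ▸ ENNReal.one_ne_top)
    filter_upwards [this] with u hu using hu.ne
  set mp : ℝ≥0∞ := ∫⁻ u, ∑' i : ℕ, (u i : ENNReal) ^ p ∂ν with hmpdef
  have hmptop : mp ≠ ⊤ := (hmp.trans ENNReal.one_lt_top).ne
  set m : ℝ := mp.toReal with hmdef
  have hm0 : 0 ≤ m := ENNReal.toReal_nonneg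
  have hm1 : m < 1 := by
    have h := (ENNReal.toReal_lt_toReal hmptop ENNReal.one_ne_top).mpr hmp
    simpa using h
  have hp1' : 0 < p - 1 := by linarith
  set t0 : ℝ := m ^ (1/(p-1)) with ht0def
  have ht00 : 0 ≤ t0 := Real.rpow_nonneg hm0 _
  have ht01 : t0 < 1 := Real.rpow_lt_one hm0 hm1 (by positivity)
  set θ2 : ℝ := (1 + t0)/2 with hθ2def
  set θ1 : ℝ := (3 + t0)/4 with hθ1def
  have hθ2pos : 0 < θ2 := by rw [hθ2def]; linarith
  have ht0θ2 : t0 < θ2 := by rw [hθ2def]; linarith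
  have hθ21 : θ2 < 1 := by rw [hθ2def]; linarith
  have hθ12 : θ2 < θ1 := by rw [hθ2def, hθ1def]; linarith
  have hθ11 : θ1 < 1 := by rw [hθ1def]; linarith
  have hθ1pos : 0 < θ1 := lt_trans hθ2pos hθ12
  set ρ : ℝ := θ1/θ2 with hρdef
  have hρ : 1 < ρ := (one_lt_div hθ2pos).mpr hθ12
  have hθ2ρ : θ2 * ρ = θ1 := by
    rw [hρdef]
    field_simp
  have hkey : m < θ2 ^ (p-1) := by
    rcases eq_or_lt_of_le hm0 with hm0' | hm0'
    · rw [← hm0']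
      exact Real.rpow_pos_of_pos hθ2pos _
    · have ht0p : t0 ^ (p-1) = m := by
        rw [ht0def, ← Real.rpow_mul hm0, one_div_mul_cancel hp1'.ne', Real.rpow_one]
      calc m = t0 ^ (p-1) := ht0p.symm
        _ < θ2 ^ (p-1) := Real.rpow_lt_rpow ht00 ht0θ2 hp1'
  set γ : ℝ≥0∞ := ENNReal.ofReal (θ2 ^ (1-p)) * mp with hγdef
  have hγ1 : γ < 1 := by
    have hmp_eq : mp = ENNReal.ofReal m := (ENNReal.ofReal_toReal hmptop).symm
    rw [hγdef, hmp_eq, ← ENNReal.ofReal_mul (Real.rpow_nonneg hθ2pos.le _)]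
    refine ENNReal.ofReal_lt_one.mpr ?_
    have hpow : θ2 ^ (1-p) * θ2 ^ (p-1) = 1 := by
      rw [← Real.rpow_add hθ2pos]
      norm_num
    calc θ2 ^ (1-p) * m < θ2 ^ (1-p) * θ2 ^ (p-1) :=
          mul_lt_mul_of_pos_left hkey (Real.rpow_pos_of_pos hθ2pos _)
      _ = 1 := hpow
  have hγtop : γ ≠ ⊤ := ENNReal.mul_ne_top ENNReal.ofReal_ne_top hmptop
  have hGtop : (1 - γ)⁻¹ ≠ ⊤ :=
    ENNReal.inv_ne_top.mpr (tsub_pos_of_lt hγ1).ne'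
  -- measurability / a.e. facts
  have hfnmeas : ∀ n : ℕ, AEStronglyMeasurable (fun ω => (cascadeMass U n ω).toReal) μ := by
    intro n
    have hWm : Measurable (fun ω => (Wm U n ω).toReal) :=
      ENNReal.measurable_toReal.comp (measurable_Wm U hUmeas n)
    have heq : (fun ω => (cascadeMass U n ω).toReal) = fun ω => (Wm U n ω).toReal := by
      funext ω
      rw [cascadeMass_eq_Wm]
    rw [heq]
    exact hWm.aestronglyMeasurable
  refine uniformIntegrable_of le_rfl ENNReal.one_ne_top hfnmeas ?_
  intro ε hε
  set e4 : ℝ≥0∞ := ENNReal.ofReal (ε/4) with he4def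
  set e2 : ℝ≥0∞ := ENNReal.ofReal (ε/2) with he2def
  have he4 : 0 < e4 := ENNReal.ofReal_pos.mpr (by linarith)
  have he2 : 0 < e2 := ENNReal.ofReal_pos.mpr (by linarith)
  have he2top : e2 ≠ ⊤ := ENNReal.ofReal_ne_top
  -- choose the truncation base
  obtain ⟨N1, hN1ge, hN1⟩ := exists_base hmean' hLlog' hρ he4
  have htend : Filter.Tendsto (fun n : ℕ => ENNReal.ofReal ((n:ℝ) ^ (1-p)) * (1 - γ)⁻¹)
      Filter.atTop (nhds 0) := by
    have h1 : Filter.Tendsto (fun x : ℝ => x ^ (-(p-1))) Filter.atTop (nhds 0) :=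
      tendsto_rpow_neg_atTop hp1'
    have h2 : Filter.Tendsto (fun n : ℕ => ((n:ℝ) ^ (1-p))) Filter.atTop (nhds 0) := by
      have : (fun n : ℕ => ((n:ℝ) ^ (1-p))) = (fun x : ℝ => x ^ (-(p-1))) ∘ (fun n : ℕ => (n:ℝ)) := by
        funext n
        simp only [Function.comp_apply]
        norm_num
      rw [this]
      exact h1.comp tendsto_natCast_atTop_atTop
    have h3 : Filter.Tendsto (fun n : ℕ => ENNReal.ofReal ((n:ℝ) ^ (1-p)))
        Filter.atTop (nhds 0) := by
      have := (ENNReal.continuous_ofReal.tendsto 0).comp h2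
      simpa [Function.comp_def] using this
    have := ENNReal.Tendsto.mul_const h3 (Or.inr hGtop)
    simpa using this
  obtain ⟨N2, hN2bound, hN2ge⟩ :=
    ((htend.eventually_lt_const he4).and (Filter.eventually_ge_atTop 1)).exists
  set B : ℕ := max N1 N2 with hBdef
  have hB1 : 1 ≤ (B:ℝ) := by
    have : N1 ≤ B := le_max_left _ _
    calc (1:ℝ) ≤ (N1:ℝ) := hN1ge
      _ ≤ (B:ℝ) := by exact_mod_cast this
  have hBpos : 0 < (B:ℝ) := by linarith
  set c : ℕ → ℝ≥0∞ := fun k => ENNReal.ofReal ((B:ℝ)*(B:ℝ) * θ1^k) with hcdef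
  set b : ℕ → ℝ≥0∞ := fun k => ENNReal.ofReal ((B:ℝ) * θ2^k) with hbdef
  -- the loss bound
  have hSd : ∑' k : ℕ, delta μ ν U c k ≤ e4 + e4 := by
    have hbk0 : ∀ k, b k ≠ 0 := fun k => by
      simp only [hbdef, ne_eq, ENNReal.ofReal_eq_zero, not_le]
      positivity
    have hbktop : ∀ k, b k ≠ ⊤ := fun k => ENNReal.ofReal_ne_top
    have hbr : ∀ k, b k * ENNReal.ofReal ((B:ℝ) * ρ^k) = c k := fun k => by
      simp only [hbdef, hcdef]
      rw [← ENNReal.ofReal_mul (by positivity)]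
      congr 1
      rw [← hθ2ρ, mul_pow]
      ring
    have hδk : ∀ k, delta μ ν U c k
        ≤ Gt ν (ENNReal.ofReal ((B:ℝ) * ρ^k)) + (b k) ^ (1-p) * mp ^ k := fun k =>
      delta_le hUmeas hUlaw hUindep hmean' (hbk0 k) (hbktop k) (hbr k) hp1
    have hsum1 : ∑' k : ℕ, Gt ν (ENNReal.ofReal ((B:ℝ) * ρ^k)) ≤ e4 := by
      have h1 : ∑' k : ℕ, Gt ν (ENNReal.ofReal ((B:ℝ) * ρ^k))
          ≤ ∫⁻ u, Hfun ρ (B:ℝ) (sig u) ∂ν := tsum_Gt_le hρ hB1 hfin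
      have h2 : ∫⁻ u, Hfun ρ (B:ℝ) (sig u) ∂ν ≤ ∫⁻ u, Hfun ρ (N1:ℝ) (sig u) ∂ν := by
        refine lintegral_mono fun u => Hfun_anti ?_ _
        exact_mod_cast le_max_left N1 N2
      exact h1.trans (h2.trans hN1.le)
    have hsum2 : ∑' k : ℕ, (b k) ^ (1-p) * mp ^ k ≤ e4 := by
      have hterm : ∀ k : ℕ, (b k) ^ (1-p) * mp ^ k
          = ENNReal.ofReal ((B:ℝ) ^ (1-p)) * γ ^ k := fun k => by
        simp only [hbdef]
        have hpos : (0:ℝ) < (B:ℝ) * θ2^k := by positivity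
        rw [ENNReal.ofReal_rpow_of_pos hpos]
        have hreal : ((B:ℝ) * θ2^k) ^ (1-p) = (B:ℝ)^(1-p) * (θ2^(1-p))^k := by
          rw [Real.mul_rpow hBpos.le (by positivity)]
          congr 1
          rw [← Real.rpow_natCast θ2 k, ← Real.rpow_mul hθ2pos.le,
            mul_comm (k:ℝ) (1-p), Real.rpow_mul hθ2pos.le, Real.rpow_natCast]
        rw [hreal, ENNReal.ofReal_mul (by positivity),
          ENNReal.ofReal_pow (Real.rpow_nonneg hθ2pos.le _), hγdef, mul_pow]
        ring
      calc ∑' k : ℕ, (b k) ^ (1-p) * mp ^ k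
          = ∑' k : ℕ, ENNReal.ofReal ((B:ℝ) ^ (1-p)) * γ ^ k := tsum_congr hterm
        _ = ENNReal.ofReal ((B:ℝ) ^ (1-p)) * (1 - γ)⁻¹ := by
            rw [ENNReal.tsum_mul_left, ENNReal.tsum_geometric]
        _ ≤ ENNReal.ofReal ((N2:ℝ) ^ (1-p)) * (1 - γ)⁻¹ := by
            refine mul_le_mul_left (ENNReal.ofReal_le_ofReal ?_) _
            have hN2B : (N2:ℝ) ≤ (B:ℝ) := by exact_mod_cast le_max_right N1 N2
            have hN2pos : (0:ℝ) < (N2:ℝ) := by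
              have : (1:ℕ) ≤ N2 := hN2ge
              exact_mod_cast Nat.lt_of_lt_of_le Nat.zero_lt_one this
            exact Real.rpow_le_rpow_of_nonpos hN2pos hN2B (by linarith)
        _ ≤ e4 := hN2bound.le
    calc ∑' k : ℕ, delta μ ν U c k
        ≤ ∑' k : ℕ, (Gt ν (ENNReal.ofReal ((B:ℝ) * ρ^k)) + (b k) ^ (1-p) * mp ^ k) :=
          ENNReal.tsum_le_tsum hδk
      _ = (∑' k : ℕ, Gt ν (ENNReal.ofReal ((B:ℝ) * ρ^k)))
          + ∑' k : ℕ, (b k) ^ (1-p) * mp ^ k := ENNReal.tsum_add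
      _ ≤ e4 + e4 := add_le_add hsum1 hsum2
  -- the second-moment constant
  set M : ℝ≥0∞ := 1 + ∑' k : ℕ, c k with hMdef
  have hMtop : M ≠ ⊤ := by
    have hck : ∀ k : ℕ, c k = ENNReal.ofReal ((B:ℝ)*(B:ℝ)) * (ENNReal.ofReal θ1) ^ k := fun k => by
      simp only [hcdef]
      rw [ENNReal.ofReal_mul (by positivity), ENNReal.ofReal_pow hθ1pos.le]
    have hsum : ∑' k : ℕ, c k
        = ENNReal.ofReal ((B:ℝ)*(B:ℝ)) * (1 - ENNReal.ofReal θ1)⁻¹ := by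
      rw [tsum_congr hck, ENNReal.tsum_mul_left, ENNReal.tsum_geometric]
    rw [hMdef, hsum]
    refine ENNReal.add_ne_top.mpr ⟨ENNReal.one_ne_top, ENNReal.mul_ne_top
      ENNReal.ofReal_ne_top (ENNReal.inv_ne_top.mpr
        (tsub_pos_of_lt (ENNReal.ofReal_lt_one.mpr hθ11)).ne')⟩
  -- choice of the cutoff C
  set C0 : ℝ≥0∞ := M * e2⁻¹ * e2⁻¹ + 1 with hC0def
  have hC0top : C0 ≠ ⊤ := by
    refine ENNReal.add_ne_top.mpr ⟨?_, ENNReal.one_ne_top⟩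
    exact ENNReal.mul_ne_top (ENNReal.mul_ne_top hMtop
      (ENNReal.inv_ne_top.mpr he2.ne')) (ENNReal.inv_ne_top.mpr he2.ne')
  have hC0ne0 : C0 ≠ 0 := by
    rw [hC0def]
    exact (zero_lt_one.trans_le le_add_self).ne'
  set C : ℝ≥0 := C0.toNNReal with hCdef
  have hCcoe : (C:ℝ≥0∞) = C0 := ENNReal.coe_toNNReal hC0top
  have hCne0 : (C:ℝ≥0∞) ≠ 0 := by rw [hCcoe]; exact hC0ne0
  have hCnetop : (C:ℝ≥0∞) ≠ ⊤ := ENNReal.coe_ne_top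
  -- the Cauchy-Schwarz part is small
  have hMC : (M * (C:ℝ≥0∞)⁻¹) ^ (1/2:ℝ) ≤ e2 := by
    have hcancel : e2 * e2⁻¹ = 1 := ENNReal.mul_inv_cancel he2.ne' he2top
    have ha : M ≤ e2 * e2 * C0 := by
      calc M = M * (e2 * e2⁻¹) * (e2 * e2⁻¹) := by rw [hcancel]; ring
        _ = e2 * e2 * (M * e2⁻¹ * e2⁻¹) := by ring
        _ ≤ e2 * e2 * C0 := mul_le_mul_right (self_le_add_right _ 1) _
    have hb2 : M * (C:ℝ≥0∞)⁻¹ ≤ e2 * e2 := by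
      rw [hCcoe]
      calc M * C0⁻¹ ≤ (e2 * e2 * C0) * C0⁻¹ := mul_le_mul_left ha _
        _ = e2 * e2 * (C0 * C0⁻¹) := by ring
        _ = e2 * e2 := by rw [ENNReal.mul_inv_cancel hC0ne0 hC0top, mul_one]
    have hc2 : (e2 * e2) ^ (1/2:ℝ) = e2 := by
      have h22 : e2 * e2 = e2 ^ (2:ℝ) := by
        rw [show (2:ℝ) = ((2:ℕ):ℝ) by norm_num, ENNReal.rpow_natCast, sq]
      rw [h22, ← ENNReal.rpow_mul]
      norm_num
    calc (M * (C:ℝ≥0∞)⁻¹) ^ (1/2:ℝ) ≤ (e2 * e2) ^ (1/2:ℝ) :=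
          ENNReal.rpow_le_rpow hb2 (by norm_num)
      _ = e2 := hc2
  -- conclusion, for each n
  refine ⟨C, fun n => ?_⟩
  set A : Set Ω := {ω' | (C:ℝ≥0∞) ≤ Wm U n ω'} with hAdef
  have hpt : ∀ ω, ((‖({x | C ≤ ‖(fun ω' => (cascadeMass U n ω').toReal) x‖₊}.indicator
      (fun ω' => (cascadeMass U n ω').toReal)) ω‖₊ : ℝ≥0∞))
      ≤ A.indicator (Wm U n) ω := by
    intro ω
    by_cases hω : ω ∈ {x | C ≤ ‖(fun ω' => (cascadeMass U n ω').toReal) x‖₊}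
    · rw [Set.indicator_of_mem hω]
      have hW : ((‖(cascadeMass U n ω).toReal‖₊ : ℝ≥0∞)) ≤ Wm U n ω := by
        rw [← enorm_eq_nnnorm, Real.enorm_eq_ofReal ENNReal.toReal_nonneg, ← cascadeMass_eq_Wm]
        exact ENNReal.ofReal_toReal_le
      have hωA : ω ∈ A := by
        have hC : (C:ℝ≥0∞) ≤ ((‖(cascadeMass U n ω).toReal‖₊ : ℝ≥0) : ℝ≥0∞) := by
          exact_mod_cast hω
        exact le_trans hC hW
      rw [Set.indicator_of_mem hωA]
      exact hW
    · rw [Set.indicator_of_notMem hω]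
      simp
  calc eLpNorm ({x | C ≤ ‖(fun ω' => (cascadeMass U n ω').toReal) x‖₊}.indicator
        (fun ω' => (cascadeMass U n ω').toReal)) 1 μ
      = ∫⁻ ω, ((‖({x | C ≤ ‖(fun ω' => (cascadeMass U n ω').toReal) x‖₊}.indicator
          (fun ω' => (cascadeMass U n ω').toReal)) ω‖₊ : ℝ≥0∞)) ∂μ :=
        eLpNorm_one_eq_lintegral_enorm
    _ ≤ ∫⁻ ω, A.indicator (Wm U n) ω ∂μ := lintegral_mono hpt
    _ ≤ (∑' k : ℕ, delta μ ν U c k) + ((1 + ∑' k : ℕ, c k) * (C:ℝ≥0∞)⁻¹) ^ (1/2:ℝ) :=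
        tail_bound hUmeas hUlaw hUindep hmean' c hCne0 hCnetop
    _ ≤ (e4 + e4) + (M * (C:ℝ≥0∞)⁻¹) ^ (1/2:ℝ) := by
        refine add_le_add hSd ?_
        rw [hMdef]
    _ ≤ e2 + e2 := by
        refine add_le_add ?_ hMC
        rw [he4def, he2def, ← ENNReal.ofReal_add (by linarith) (by linarith)]
        refine ENNReal.ofReal_le_ofReal ?_
        linarith
    _ = ENNReal.ofReal ε := by
        rw [he2def, ← ENNReal.ofReal_add (by linarith) (by linarith)]
        congr 1
        linarith
end
end

section
/- For every real a ≥ 1, the function x ↦ x · log^{(a)}(x) is monotone increasing and convex on [0,∞). -/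
open Real Set Filter

/-- `log^{(a)}(x) = (a/e)^a · x` for `x < e^a`, and `(log x)^a` for `x ≥ e^a`. -/
noncomputable def logA (a : ℝ) (x : ℝ) : ℝ :=
  if x < Real.exp a then (a / Real.exp 1) ^ a * x else Real.log x ^ a

/-- for every `a ≥ 1`, the function `x ↦ x · log^{(a)}(x)` is monotone
increasing and convex on `[0,∞)`. -/
theorem mul_logA_monotoneOn_convexOn (a : ℝ) (ha : 1 ≤ a) :
    MonotoneOn (fun x => x * logA a x) (Set.Ici (0 : ℝ)) ∧
    ConvexOn ℝ (Set.Ici (0 : ℝ)) (fun x => x * logA a x) := by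
  have ha0 : (0:ℝ) < a := lt_of_lt_of_le one_pos ha
  have hEpos : (0:ℝ) < Real.exp a := Real.exp_pos a
  have hc0 : (0:ℝ) ≤ (a / Real.exp 1) ^ a := Real.rpow_nonneg (by positivity) a
  have hcE : (a / Real.exp 1) ^ a * Real.exp a = a ^ a := by
    rw [Real.div_rpow ha0.le (Real.exp_pos 1).le, Real.exp_one_rpow]
    field_simp
  have hsplit : a ^ a = a * a ^ (a - 1) := by
    have h := Real.rpow_add ha0 1 (a - 1)
    have h1 : (1:ℝ) + (a - 1) = a := by ring
    rw [h1, Real.rpow_one] at h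
    exact h
  -- agreement on pieces
  have hf1 : ∀ x ∈ Iic (Real.exp a), x * logA a x = (a / Real.exp 1) ^ a * x ^ 2 := by
    intro x hx
    rcases lt_or_eq_of_le (Set.mem_Iic.mp hx) with h | h
    · rw [logA, if_pos h]; ring
    · rw [h, logA, if_neg (lt_irrefl _), Real.log_exp, sq, ← mul_assoc, hcE]; ring
  have hf2 : ∀ x ∈ Ici (Real.exp a), x * logA a x = x * Real.log x ^ a := by
    intro x hx
    rw [logA, if_neg (not_lt.mpr hx)]
  -- derivative formula
  set g : ℝ → ℝ := fun x =>
    if x < Real.exp a then 2 * ((a / Real.exp 1) ^ a) * x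
    else Real.log x ^ a + a * Real.log x ^ (a - 1) with hg
  have hleft_has : ∀ x : ℝ, HasDerivAt (fun y => (a / Real.exp 1) ^ a * y ^ 2)
      (2 * ((a / Real.exp 1) ^ a) * x) x := by
    intro x
    have h := (hasDerivAt_pow 2 x).const_mul ((a / Real.exp 1) ^ a)
    refine h.congr_deriv ?_
    norm_num; ring
  have hlog_ge : ∀ x : ℝ, Real.exp a ≤ x → a ≤ Real.log x := by
    intro x hx
    have := Real.log_le_log hEpos hx
    rwa [Real.log_exp] at this
  have hright_has : ∀ x : ℝ, Real.exp a ≤ x →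
      HasDerivAt (fun y => y * Real.log y ^ a)
        (Real.log x ^ a + a * Real.log x ^ (a - 1)) x := by
    intro x hx
    have hx0 : 0 < x := lt_of_lt_of_le hEpos hx
    have hlx : a ≤ Real.log x := hlog_ge x hx
    have hlx0 : Real.log x ≠ 0 := ne_of_gt (lt_of_lt_of_le ha0 hlx)
    have h1 : HasDerivAt Real.log x⁻¹ x := Real.hasDerivAt_log hx0.ne'
    have h2 : HasDerivAt (fun y => Real.log y ^ a)
        (a * Real.log x ^ (a - 1) * x⁻¹) x :=
      (Real.hasDerivAt_rpow_const (Or.inl hlx0)).comp x h1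
    have h3 := (hasDerivAt_id x).mul h2
    refine h3.congr_deriv ?_
    simp only [id]
    field_simp
  have hderiv : ∀ x ∈ Ioi (0:ℝ), HasDerivAt (fun x => x * logA a x) (g x) x := by
    intro x hx
    rcases lt_trichotomy x (Real.exp a) with h | h | h
    · have hev : (fun x => x * logA a x) =ᶠ[nhds x] fun y => (a / Real.exp 1) ^ a * y ^ 2 :=
        eventually_of_mem (Iio_mem_nhds h) fun y hy => hf1 y (Set.mem_Iic.mpr (Set.mem_Iio.mp hy).le)
      have hd := (hleft_has x).congr_of_eventuallyEq hev
      rw [hg]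
      simpa [if_pos h] using hd
    · subst h
      have hgE : g (Real.exp a) = 2 * ((a / Real.exp 1) ^ a) * Real.exp a := by
        rw [hg]
        simp only [lt_irrefl, if_false, Real.log_exp]
        rw [← hsplit]
        linarith [hcE]
      have hL : HasDerivWithinAt (fun x => x * logA a x) (g (Real.exp a))
          (Iic (Real.exp a)) (Real.exp a) := by
        have h2 := ((hleft_has (Real.exp a)).hasDerivWithinAt (s := Iic (Real.exp a))).congr
          hf1 (hf1 _ (Set.mem_Iic.mpr le_rfl))
        rwa [hgE]
      have hR : HasDerivWithinAt (fun x => x * logA a x) (g (Real.exp a))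
          (Ici (Real.exp a)) (Real.exp a) := by
        have h2 := ((hright_has (Real.exp a) le_rfl).hasDerivWithinAt
          (s := Ici (Real.exp a))).congr hf2 (hf2 _ (Set.mem_Ici.mpr le_rfl))
        have : g (Real.exp a) = Real.log (Real.exp a) ^ a
            + a * Real.log (Real.exp a) ^ (a - 1) := by
          rw [hg]; simp only [lt_irrefl, if_false]
        rwa [this]
      have := hL.union hR
      rw [Iic_union_Ici] at this
      exact hasDerivWithinAt_univ.mp this
    · have hev : (fun x => x * logA a x) =ᶠ[nhds x] fun y => y * Real.log y ^ a :=
        eventually_of_mem (Ioi_mem_nhds h) fun y hy => hf2 y (Set.mem_Ici.mpr (Set.mem_Ioi.mp hy).le)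
      have hd := (hright_has x h.le).congr_of_eventuallyEq hev
      rw [hg]
      simpa [if_neg (not_lt.mpr h.le)] using hd
  -- continuity on [0, ∞)
  have hcont : ContinuousOn (fun x => x * logA a x) (Ici (0:ℝ)) := by
    intro x hx
    rcases eq_or_lt_of_le (Set.mem_Ici.mp hx) with h | h
    · have hev : (fun x => x * logA a x) =ᶠ[nhds x] fun y => (a / Real.exp 1) ^ a * y ^ 2 := by
        refine eventually_of_mem (Iio_mem_nhds ?_) fun y hy => hf1 y (Set.mem_Iic.mpr (Set.mem_Iio.mp hy).le)
        rw [← h]; exact hEpos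
      exact (((continuous_const.mul (continuous_pow 2)).continuousAt).congr
        hev.symm).continuousWithinAt
    · exact ((hderiv x h).continuousAt).continuousWithinAt
  have hdiff : DifferentiableOn ℝ (fun x => x * logA a x) (interior (Ici (0:ℝ))) := by
    rw [interior_Ici]
    exact fun x hx => ((hderiv x hx).differentiableAt).differentiableWithinAt
  -- derivative nonneg and monotone
  have hg_nonneg : ∀ x ∈ Ioi (0:ℝ), 0 ≤ g x := by
    intro x hx
    simp only [hg]
    by_cases h : x < Real.exp a
    · rw [if_pos h]
      have : (0:ℝ) ≤ x := le_of_lt hx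
      positivity
    · rw [if_neg h]
      have hlx : a ≤ Real.log x := hlog_ge x (not_lt.mp h)
      have h0 : (0:ℝ) ≤ Real.log x := le_trans ha0.le hlx
      exact add_nonneg (Real.rpow_nonneg h0 a)
        (mul_nonneg ha0.le (Real.rpow_nonneg h0 (a - 1)))
  have hg_mono : MonotoneOn g (Ioi (0:ℝ)) := by
    intro x hx y hy hxy
    have key : ∀ z : ℝ, Real.exp a ≤ z →
        2 * ((a / Real.exp 1) ^ a) * Real.exp a ≤ Real.log z ^ a + a * Real.log z ^ (a - 1) := by
      intro z hz
      have hlz : a ≤ Real.log z := hlog_ge z hz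
      have h1 : a ^ a ≤ Real.log z ^ a := Real.rpow_le_rpow ha0.le hlz ha0.le
      have h2 : a ^ (a - 1) ≤ Real.log z ^ (a - 1) :=
        Real.rpow_le_rpow ha0.le hlz (by linarith)
      have h3 : a * a ^ (a - 1) ≤ a * Real.log z ^ (a - 1) :=
        mul_le_mul_of_nonneg_left h2 ha0.le
      nlinarith [hcE, hsplit]
    simp only [hg]
    by_cases h1 : x < Real.exp a <;> by_cases h2 : y < Real.exp a
    · simp only [if_pos h1, if_pos h2]
      have := le_of_lt (Set.mem_Ioi.mp hx)
      nlinarith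
    · simp only [if_pos h1, if_neg h2]
      have hxE : x ≤ Real.exp a := h1.le
      have : 2 * ((a / Real.exp 1) ^ a) * x ≤ 2 * ((a / Real.exp 1) ^ a) * Real.exp a := by
        nlinarith
      exact le_trans this (key y (not_lt.mp h2))
    · exact absurd (lt_of_le_of_lt ((not_lt.mp h1).trans hxy) h2) (lt_irrefl _)
    · simp only [if_neg h1, if_neg h2]
      have hlx : a ≤ Real.log x := hlog_ge x (not_lt.mp h1)
      have h0x : (0:ℝ) ≤ Real.log x := le_trans ha0.le hlx
      have hxy0 : 0 < x := hx
      have hll : Real.log x ≤ Real.log y := Real.log_le_log hxy0 hxy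
      have hA : Real.log x ^ a ≤ Real.log y ^ a := Real.rpow_le_rpow h0x hll ha0.le
      have hB : Real.log x ^ (a - 1) ≤ Real.log y ^ (a - 1) :=
        Real.rpow_le_rpow h0x hll (by linarith)
      have hC : a * Real.log x ^ (a - 1) ≤ a * Real.log y ^ (a - 1) :=
        mul_le_mul_of_nonneg_left hB ha0.le
      linarith
  have hderiv_eq : ∀ x ∈ interior (Ici (0:ℝ)), deriv (fun x => x * logA a x) x = g x := by
    rw [interior_Ici]
    exact fun x hx => (hderiv x hx).deriv
  constructor
  · refine monotoneOn_of_deriv_nonneg (convex_Ici 0) hcont hdiff fun x hx => ?_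
    rw [hderiv_eq x hx]
    rw [interior_Ici] at hx
    exact hg_nonneg x hx
  · refine MonotoneOn.convexOn_of_deriv (convex_Ici 0) hcont hdiff ?_
    intro x hx y hy hxy
    rw [hderiv_eq x hx, hderiv_eq y hy]
    rw [interior_Ici] at hx hy
    exact hg_mono hx hy hxy
end

section
/- Let a ≥ 1 and let X_1, …, X_N be independent nonnegative integrable random variables, and set S = X_1 + ⋯ + X_N. Then E[S · log^{(a)}(S)] ≤ E[S] · log^{(a)}(E[S]) + Σ_{i=1}^N E[X_i · log^{(a)}(X_i)], where the expectations of the (nonnegative) quantities involving log^{(a)} are taken with values in [0,∞]. -/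
open MeasureTheory ProbabilityTheory

section Aux

variable {a : ℝ}

lemma c_nonneg (ha : 1 ≤ a) : 0 ≤ (a / Real.exp 1) ^ a :=
  Real.rpow_nonneg (div_nonneg (by linarith) (Real.exp_pos 1).le) a

lemma c_mul_exp (ha : 1 ≤ a) : (a / Real.exp 1) ^ a * Real.exp a = a ^ a := by
  rw [Real.div_rpow (by linarith) (Real.exp_pos 1).le, Real.exp_one_rpow]
  field_simp

lemma logA_zero (ha : 1 ≤ a) : logA a 0 = 0 := by
  simp [logA, Real.exp_pos a]

lemma logA_nonneg (ha : 1 ≤ a) {x : ℝ} (hx : 0 ≤ x) : 0 ≤ logA a x := by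
  unfold logA
  split_ifs with h
  · exact mul_nonneg (c_nonneg ha) hx
  · push_neg at h
    have hx1 : 0 < x := lt_of_lt_of_le (Real.exp_pos a) h
    have : (0:ℝ) ≤ Real.log x := by
      have := (Real.le_log_iff_exp_le hx1).2 h
      linarith
    exact Real.rpow_nonneg this a

lemma logA_le (ha : 1 ≤ a) {x : ℝ} (hx : 0 ≤ x) :
    logA a x ≤ (a / Real.exp 1) ^ a * x := by
  unfold logA
  split_ifs with h
  · exact le_refl _
  · push_neg at h
    have hx1 : 0 < x := lt_of_lt_of_le (Real.exp_pos a) h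
    have ha0 : (0:ℝ) < a := by linarith
    set t := x ^ (a⁻¹) with ht
    have htpos : 0 < t := Real.rpow_pos_of_pos hx1 _
    have hlogt : Real.log t ≤ t / Real.exp 1 := by
      have h1 : Real.log (t / Real.exp 1) ≤ t / Real.exp 1 - 1 :=
        Real.log_le_sub_one_of_pos (div_pos htpos (Real.exp_pos 1))
      rw [Real.log_div htpos.ne' (Real.exp_pos 1).ne', Real.log_exp] at h1
      linarith
    have hlogx : Real.log x = a * Real.log t := by
      rw [ht, Real.log_rpow hx1]
      field_simp
    have hkey : Real.log x ≤ a / Real.exp 1 * t := by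
      rw [hlogx]
      calc a * Real.log t ≤ a * (t / Real.exp 1) :=
            mul_le_mul_of_nonneg_left hlogt ha0.le
        _ = a / Real.exp 1 * t := by ring
    have hlx0 : 0 ≤ Real.log x := by
      have := (Real.le_log_iff_exp_le hx1).2 h
      linarith
    calc Real.log x ^ a ≤ (a / Real.exp 1 * t) ^ a :=
          Real.rpow_le_rpow hlx0 hkey ha0.le
      _ = (a / Real.exp 1) ^ a * t ^ a := by
          rw [Real.mul_rpow (div_nonneg ha0.le (Real.exp_pos 1).le) htpos.le]
      _ = (a / Real.exp 1) ^ a * x := by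
          rw [ht, ← Real.rpow_mul hx, inv_mul_cancel₀ ha0.ne', Real.rpow_one]

lemma logA_mono (ha : 1 ≤ a) {x y : ℝ} (hx : 0 ≤ x) (hxy : x ≤ y) :
    logA a x ≤ logA a y := by
  have ha0 : (0:ℝ) ≤ a := by linarith
  unfold logA
  split_ifs with h1 h2
  · exact mul_le_mul_of_nonneg_left hxy (c_nonneg ha)
  · push_neg at h2
    have hy1 : 0 < y := lt_of_lt_of_le (Real.exp_pos a) h2
    have hay : a ≤ Real.log y := (Real.le_log_iff_exp_le hy1).2 h2
    calc (a / Real.exp 1) ^ a * x ≤ (a / Real.exp 1) ^ a * Real.exp a :=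
          mul_le_mul_of_nonneg_left h1.le (c_nonneg ha)
      _ = a ^ a := c_mul_exp ha
      _ ≤ Real.log y ^ a := Real.rpow_le_rpow ha0 hay ha0
  · push_neg at h1
    exact absurd (lt_of_le_of_lt (le_trans h1 hxy) (by assumption)) (lt_irrefl _)
  · push_neg at h1
    rename_i h2
    push_neg at h2
    have hx1 : 0 < x := lt_of_lt_of_le (Real.exp_pos a) h1
    have hax : a ≤ Real.log x := (Real.le_log_iff_exp_le hx1).2 h1
    have hlx0 : 0 ≤ Real.log x := by linarith
    exact Real.rpow_le_rpow hlx0 (Real.log_le_log hx1 hxy) ha0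

end Aux
section Aux2

variable {a : ℝ}

/-- `t ↦ b log t − t` is antitone on `[b, ∞) ∩ (0, ∞)`. -/
lemma psi_le {b v w : ℝ} (hb : 0 ≤ b) (hbv : b ≤ v) (hv : 0 < v) (hvw : v ≤ w) :
    b * Real.log w - w ≤ b * Real.log v - v := by
  have hw : 0 < w := lt_of_lt_of_le hv hvw
  have h1 : Real.log (w / v) ≤ w / v - 1 := Real.log_le_sub_one_of_pos (div_pos hw hv)
  have h2 : Real.log (w / v) = Real.log w - Real.log v := Real.log_div hw.ne' hv.ne'
  have h3 : b * (Real.log w - Real.log v) ≤ b * (w / v - 1) := by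
    rw [← h2]; exact mul_le_mul_of_nonneg_left h1 hb
  have h4 : b * (w / v - 1) ≤ w - v := by
    rw [div_sub_one hv.ne', ← mul_div_assoc, div_le_iff₀ hv]
    nlinarith [sub_nonneg.2 hvw, sub_nonneg.2 hbv]
  linarith

/-- Key concavity inequality: for `a ≤ v`, `a ≤ u`,
`u^a ≤ v^a + a v^(a-1) (e^(u-v) - 1)`. -/
lemma key_ineq (ha : 1 ≤ a) {v u : ℝ} (hv : a ≤ v) (hu : a ≤ u) :
    u ^ a ≤ v ^ a + a * v ^ (a - 1) * (Real.exp (u - v) - 1) := by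
  have hvpos : 0 < v := lt_of_lt_of_le (by linarith) hv
  have hupos : 0 < u := lt_of_lt_of_le (by linarith) hu
  set F : ℝ → ℝ := fun t => v ^ a + a * v ^ (a - 1) * (Real.exp (t - v) - 1) - t ^ a with hF
  have hFv : F v = 0 := by simp [hF]
  have hderiv : ∀ x : ℝ, 0 < x →
      HasDerivAt F (a * v ^ (a - 1) * Real.exp (x - v) - a * x ^ (a - 1)) x := by
    intro x hx
    have h1 : HasDerivAt (fun t : ℝ => Real.exp (t - v)) (Real.exp (x - v)) x := by
      simpa [Function.comp_def] using (Real.hasDerivAt_exp (x - v)).comp x ((hasDerivAt_id x).sub_const v)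
    have h2 : HasDerivAt (fun t : ℝ => v ^ a + a * v ^ (a - 1) * (Real.exp (t - v) - 1))
        (a * v ^ (a - 1) * Real.exp (x - v)) x := by
      simpa using ((h1.sub_const 1).const_mul (a * v ^ (a - 1))).const_add (v ^ a)
    have h3 : HasDerivAt (fun t : ℝ => t ^ a) (a * x ^ (a - 1)) x := by
      simpa using Real.hasDerivAt_rpow_const (p := a) (Or.inl hx.ne')
    exact h2.sub h3
  -- exponential comparison for the derivative sign
  have hcomp : ∀ x y : ℝ, a ≤ x → 0 < x → x ≤ y →
      y ^ (a - 1) * Real.exp (x - y) ≤ x ^ (a - 1) := by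
    intro x y hax hx hxy
    have hy : 0 < y := lt_of_lt_of_le hx hxy
    have hpsi := psi_le (b := a - 1) (by linarith) (by linarith) hx hxy
    have : (a - 1) * Real.log y + (x - y) ≤ (a - 1) * Real.log x := by linarith
    calc y ^ (a - 1) * Real.exp (x - y)
        = Real.exp ((a - 1) * Real.log y + (x - y)) := by
          rw [Real.exp_add, Real.rpow_def_of_pos hy, mul_comm (Real.log y)]
      _ ≤ Real.exp ((a - 1) * Real.log x) := Real.exp_le_exp.2 this
      _ = x ^ (a - 1) := by rw [Real.rpow_def_of_pos hx, mul_comm]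
  rcases le_or_gt u v with huv | hvu
  · -- F antitone on [u, v], so F v ≤ F u
    have hanti : AntitoneOn F (Set.Icc u v) := by
      apply antitoneOn_of_deriv_nonpos (convex_Icc u v)
      · intro x hx
        exact (hderiv x (lt_of_lt_of_le hupos hx.1)).continuousAt.continuousWithinAt
      · intro x hx
        rw [interior_Icc] at hx
        exact (hderiv x (lt_trans hupos hx.1)).differentiableAt.differentiableWithinAt
      · intro x hx
        rw [interior_Icc] at hx
        rw [(hderiv x (lt_trans hupos hx.1)).deriv]
        have := hcomp x v (le_trans hu hx.1.le) (lt_trans hupos hx.1) hx.2.le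
        nlinarith [this, (show (0:ℝ) < a by linarith)]
    have := hanti (Set.left_mem_Icc.2 huv) (Set.right_mem_Icc.2 huv) huv
    rw [hFv] at this
    have hFu : 0 ≤ F u := this
    simp only [hF] at hFu
    linarith
  · -- F monotone on [v, u], so F v ≤ F u
    have hmono : MonotoneOn F (Set.Icc v u) := by
      apply monotoneOn_of_deriv_nonneg (convex_Icc v u)
      · intro x hx
        exact (hderiv x (lt_of_lt_of_le hvpos hx.1)).continuousAt.continuousWithinAt
      · intro x hx
        rw [interior_Icc] at hx
        exact (hderiv x (lt_trans hvpos hx.1)).differentiableAt.differentiableWithinAt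
      · intro x hx
        rw [interior_Icc] at hx
        rw [(hderiv x (lt_trans hvpos hx.1)).deriv]
        have h4 := hcomp v x hv hvpos hx.1.le
        have hmul : Real.exp (v - x) * Real.exp (x - v) = 1 := by
          rw [← Real.exp_add]; simp
        have h5 : x ^ (a - 1) ≤ v ^ (a - 1) * Real.exp (x - v) := by
          have h6 := mul_le_mul_of_nonneg_right h4 (Real.exp_pos (x - v)).le
          rw [mul_assoc, hmul, mul_one] at h6
          exact h6
        nlinarith [h5, (show (0:ℝ) < a by linarith)]
    have := hmono (Set.left_mem_Icc.2 hvu.le) (Set.right_mem_Icc.2 hvu.le) hvu.le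
    rw [hFv] at this
    have hFu : 0 ≤ F u := this
    simp only [hF] at hFu
    linarith

end Aux2
section Aux3

variable {a : ℝ}

lemma measurable_logA : Measurable (logA a) := by
  unfold logA
  exact Measurable.ite (measurableSet_Iio)
    (measurable_const.mul measurable_id)
    ((Real.measurable_log).pow_const a)

/-- tangent-line inequality at a point `m ≥ e^a`. -/
lemma logA_tangent (ha : 1 ≤ a) {y m : ℝ} (hy : 0 ≤ y) (hm : Real.exp a ≤ m) :
    logA a y ≤ logA a m + a * Real.log m ^ (a - 1) / m * (y - m) := by
  have hmpos : 0 < m := lt_of_lt_of_le (Real.exp_pos a) hm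
  have hvm : a ≤ Real.log m := (Real.le_log_iff_exp_le hmpos).2 hm
  set v := Real.log m with hvdef
  have hexpv : Real.exp v = m := Real.exp_log hmpos
  have hlogAm : logA a m = v ^ a := by
    unfold logA; rw [if_neg (not_lt.2 hm)]
  have hv1 : (0:ℝ) < v := lt_of_lt_of_le (by linarith) hvm
  rcases lt_or_ge y (Real.exp a) with hylt | hyge
  · -- linear part: both sides affine in y; check endpoints 0 and exp a
    have hA : (0:ℝ) ≤ v ^ a - a * v ^ (a - 1) := by
      have : v ^ a = v ^ (a - 1) * v := by
        rw [← Real.rpow_add_one hv1.ne' (a - 1)]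
        ring_nf
      rw [this]
      have h1 : a * v ^ (a - 1) ≤ v ^ (a - 1) * v := by
        rw [mul_comm]
        exact mul_le_mul_of_nonneg_left hvm (Real.rpow_nonneg hv1.le _)
      linarith
    have hE : (0:ℝ) < Real.exp a := Real.exp_pos a
    -- endpoint y = exp a : from key_ineq with u = a
    have hkey := key_ineq ha hvm (le_refl a)
    have haa : (a / Real.exp 1) ^ a * Real.exp a = a ^ a := c_mul_exp ha
    have hexp : Real.exp (a - v) = Real.exp a / m := by
      rw [Real.exp_sub, hexpv]
    have hend : (a / Real.exp 1) ^ a * Real.exp a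
        ≤ v ^ a + a * v ^ (a - 1) / m * (Real.exp a - m) := by
      rw [haa]
      have : a * v ^ (a - 1) * (Real.exp (a - v) - 1)
          = a * v ^ (a - 1) / m * (Real.exp a - m) := by
        rw [hexp]; field_simp
      linarith [hkey, this.symm.le, this.le]
    -- now interpolate linearly on [0, exp a]
    have hlogAy : logA a y = (a / Real.exp 1) ^ a * y := by
      unfold logA; rw [if_pos hylt]
    rw [hlogAy, hlogAm]
    set c := (a / Real.exp 1) ^ a with hc
    set B := a * v ^ (a - 1) / m with hB
    -- goal: c * y ≤ v^a + B * (y - m); at y = 0 : 0 ≤ v^a - B*m = v^a - a v^(a-1) ≥ 0 OK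
    have hBm : B * m = a * v ^ (a - 1) := by
      rw [hB]; field_simp
    have h0 : 0 ≤ v ^ a + B * (0 - m) := by
      rw [zero_sub, mul_neg, hBm]; linarith
    have h1 : c * Real.exp a ≤ v ^ a + B * (Real.exp a - m) := hend
    nlinarith [mul_le_mul_of_nonneg_right h1 hy, mul_le_mul_of_nonneg_left h0
      (sub_nonneg.2 hylt.le), hE]
  · -- log part
    have hypos : 0 < y := lt_of_lt_of_le (Real.exp_pos a) hyge
    have huy : a ≤ Real.log y := (Real.le_log_iff_exp_le hypos).2 hyge
    have hexpu : Real.exp (Real.log y) = y := Real.exp_log hypos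
    have hkey := key_ineq ha hvm huy
    have hlogAy : logA a y = Real.log y ^ a := by
      unfold logA; rw [if_neg (not_lt.2 hyge)]
    have hexp : Real.exp (Real.log y - v) = y / m := by
      rw [Real.exp_sub, hexpv, hexpu]
    have : a * v ^ (a - 1) * (Real.exp (Real.log y - v) - 1)
        = a * v ^ (a - 1) / m * (y - m) := by
      rw [hexp]; field_simp
    rw [hlogAy, hlogAm]
    linarith [hkey, this.le, this.symm.le]

/-- ratio monotonicity : for `0 < t ≤ s`, `t · f(s) ≤ s · f(t)`. -/
lemma logA_ratio (ha : 1 ≤ a) {t s : ℝ} (ht : 0 < t) (hts : t ≤ s) :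
    t * logA a s ≤ s * logA a t := by
  have hs : 0 < s := lt_of_lt_of_le ht hts
  unfold logA
  split_ifs with h1 h2 h2
  · ring_nf
    exact le_refl _
  · exact absurd (lt_of_le_of_lt (le_trans (not_lt.1 h2) hts) h1) (lt_irrefl _)
  · -- t < exp a ≤ s
    push_neg at h1
    have hls : Real.log s ^ a ≤ (a / Real.exp 1) ^ a * s := by
      have := logA_le ha hs.le
      unfold logA at this
      rwa [if_neg (not_lt.2 h1)] at this
    calc t * Real.log s ^ a ≤ t * ((a / Real.exp 1) ^ a * s) :=
          mul_le_mul_of_nonneg_left hls ht.le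
      _ = s * ((a / Real.exp 1) ^ a * t) := by ring
  · -- exp a ≤ t ≤ s
    push_neg at h1 h2
    have hat : a ≤ Real.log t := (Real.le_log_iff_exp_le ht).2 h2
    have has : a ≤ Real.log s := (Real.le_log_iff_exp_le hs).2 h1
    have hlog : Real.log t ≤ Real.log s := Real.log_le_log ht hts
    have hpsi := psi_le (b := a) (by linarith) hat (by linarith) hlog
    have h3 : a * Real.log (Real.log s) + Real.log t
        ≤ a * Real.log (Real.log t) + Real.log s := by linarith
    have h4 : Real.log s ^ a * t ≤ Real.log t ^ a * s := by
      have hlt : (0:ℝ) < Real.log t := by linarith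
      have hls' : (0:ℝ) < Real.log s := by linarith
      calc Real.log s ^ a * t
          = Real.exp (a * Real.log (Real.log s) + Real.log t) := by
            rw [Real.exp_add, Real.rpow_def_of_pos hls', mul_comm (Real.log (Real.log s)),
              Real.exp_log ht]
        _ ≤ Real.exp (a * Real.log (Real.log t) + Real.log s) := Real.exp_le_exp.2 h3
        _ = Real.log t ^ a * s := by
            rw [Real.exp_add, Real.rpow_def_of_pos hlt, mul_comm (Real.log (Real.log t)),
              Real.exp_log hs]
    linarith [h4]

lemma logA_subadd (ha : 1 ≤ a) {x y : ℝ} (hx : 0 ≤ x) (hy : 0 ≤ y) :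
    logA a (x + y) ≤ logA a x + logA a y := by
  rcases eq_or_lt_of_le hx with hx0 | hx0
  · rw [← hx0, zero_add]
    have := logA_nonneg ha (le_refl (0:ℝ))
    rw [logA_zero ha]; linarith [logA_nonneg ha hy]
  rcases eq_or_lt_of_le hy with hy0 | hy0
  · rw [← hy0, add_zero]
    rw [logA_zero ha]; linarith [logA_nonneg ha hx]
  have hxy : 0 < x + y := by linarith
  have h1 : x * logA a (x + y) ≤ (x + y) * logA a x :=
    logA_ratio ha hx0 (by linarith)
  have h2 : y * logA a (x + y) ≤ (x + y) * logA a y :=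
    logA_ratio ha hy0 (by linarith)
  have h3 : (x + y) * logA a (x + y) ≤ (x + y) * (logA a x + logA a y) := by
    nlinarith [h1, h2]
  exact le_of_mul_le_mul_left (by linarith [h3]) hxy

end Aux3
section Jensen

variable {Ω : Type*} {mΩ : MeasurableSpace Ω} {μ : MeasureTheory.Measure Ω}
  [MeasureTheory.IsProbabilityMeasure μ] {a : ℝ}

lemma integrable_logA_comp (ha : 1 ≤ a) {Y : Ω → ℝ} (hmeas : Measurable Y)
    (hnn : ∀ ω, 0 ≤ Y ω) (hint : MeasureTheory.Integrable Y μ) :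
    MeasureTheory.Integrable (fun ω => logA a (Y ω)) μ := by
  apply MeasureTheory.Integrable.mono (hint.const_mul ((a / Real.exp 1) ^ a))
    ((measurable_logA.comp hmeas).aestronglyMeasurable)
  filter_upwards with ω
  simp only [Function.comp_apply, Real.norm_eq_abs]
  rw [abs_of_nonneg (logA_nonneg ha (hnn ω))]
  exact le_trans (logA_le ha (hnn ω)) (le_abs_self _)

lemma jensen_logA (ha : 1 ≤ a) {Y : Ω → ℝ} (hmeas : Measurable Y)
    (hnn : ∀ ω, 0 ≤ Y ω) (hint : MeasureTheory.Integrable Y μ) :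
    ∫ ω, logA a (Y ω) ∂μ ≤ logA a (∫ ω, Y ω ∂μ) := by
  set m := ∫ ω, Y ω ∂μ with hm
  have hm0 : 0 ≤ m := MeasureTheory.integral_nonneg hnn
  have hfY_int := integrable_logA_comp (μ := μ) ha hmeas hnn hint
  rcases lt_or_ge m (Real.exp a) with hmlt | hmge
  · have h1 : ∫ ω, logA a (Y ω) ∂μ ≤ ∫ ω, (a / Real.exp 1) ^ a * Y ω ∂μ :=
      MeasureTheory.integral_mono hfY_int (hint.const_mul _) (fun ω => logA_le ha (hnn ω))
    rw [MeasureTheory.integral_const_mul] at h1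
    have h2 : logA a m = (a / Real.exp 1) ^ a * m := by
      unfold logA; rw [if_pos hmlt]
    rw [h2]; exact h1
  · set B := a * Real.log m ^ (a - 1) / m with hB
    have h1 : ∫ ω, logA a (Y ω) ∂μ ≤ ∫ ω, (logA a m + B * (Y ω - m)) ∂μ := by
      apply MeasureTheory.integral_mono hfY_int
      · exact (MeasureTheory.integrable_const (logA a m)).add
          (((hint.sub (MeasureTheory.integrable_const m)).const_mul B))
      · exact fun ω => logA_tangent ha (hnn ω) hmge
    have h2 : ∫ ω, (logA a m + B * (Y ω - m)) ∂μ = logA a m := by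
      have hi2 : MeasureTheory.Integrable (fun ω => B * (Y ω - m)) μ :=
        (hint.sub (MeasureTheory.integrable_const m)).const_mul B
      rw [MeasureTheory.integral_add (MeasureTheory.integrable_const _) hi2,
        MeasureTheory.integral_const, MeasureTheory.integral_const_mul,
        MeasureTheory.integral_sub hint (MeasureTheory.integrable_const m),
        MeasureTheory.integral_const]
      simp [← hm]
    rw [h2] at h1; exact h1

end Jensen
section Main

open MeasureTheory ProbabilityTheory

theorem sum_logA_inequality_meas
    {Ω : Type*} {mΩ : MeasurableSpace Ω} (μ : Measure Ω) [IsProbabilityMeasure μ]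
    (a : ℝ) (ha : 1 ≤ a) (N : ℕ) (X : Fin N → Ω → ℝ)
    (hXnonneg : ∀ i ω, 0 ≤ X i ω)
    (hXmeas : ∀ i, Measurable (X i))
    (hXint : ∀ i, Integrable (X i) μ)
    (hXindep : iIndepFun X μ) :
    ∫⁻ ω, ENNReal.ofReal ((∑ i, X i ω) * logA a (∑ i, X i ω)) ∂μ
      ≤ ENNReal.ofReal ((∫ ω, ∑ i, X i ω ∂μ) * logA a (∫ ω, ∑ i, X i ω ∂μ))
        + ∑ i, ∫⁻ ω, ENNReal.ofReal (X i ω * logA a (X i ω)) ∂μ := by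
  classical
  set S : Ω → ℝ := fun ω => ∑ i, X i ω with hSdef
  have hSmeas : Measurable S := Finset.measurable_sum _ (fun i _ => hXmeas i)
  have hSnn : ∀ ω, 0 ≤ S ω := fun ω => Finset.sum_nonneg fun i _ => hXnonneg i ω
  have hSint : Integrable S μ := integrable_finset_sum _ (fun i _ => hXint i)
  set T : Fin N → Ω → ℝ := fun i => ∑ j ∈ Finset.univ.erase i, X j with hTdef
  have hT_apply : ∀ i ω, T i ω = ∑ j ∈ Finset.univ.erase i, X j ω := by
    intro i ω; simp [hTdef, Finset.sum_apply]
  have hTmeas : ∀ i, Measurable (T i) := by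
    intro i
    have h1 : Measurable (fun ω => ∑ j ∈ Finset.univ.erase i, X j ω) :=
      Finset.measurable_sum _ (fun j _ => hXmeas j)
    have h2 : T i = fun ω => ∑ j ∈ Finset.univ.erase i, X j ω := funext (hT_apply i)
    rw [h2]
    exact h1
  have hTnn : ∀ i ω, 0 ≤ T i ω := by
    intro i ω; rw [hT_apply]; exact Finset.sum_nonneg fun j _ => hXnonneg j ω
  have hTint : ∀ i, Integrable (T i) μ := by
    intro i
    have : Integrable (fun ω => ∑ j ∈ Finset.univ.erase i, X j ω) μ :=
      integrable_finset_sum _ (fun j _ => hXint j)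
    exact this.congr (Filter.Eventually.of_forall fun ω => (hT_apply i ω).symm)
  have hsplit : ∀ i ω, S ω = X i ω + T i ω := by
    intro i ω
    rw [hT_apply]
    exact (Finset.add_sum_erase Finset.univ (fun j => X j ω) (Finset.mem_univ i)).symm
  have hind : ∀ i, IndepFun (T i) (X i) μ := fun i =>
    hXindep.indepFun_finsetSum_of_notMem hXmeas (Finset.notMem_erase i Finset.univ)
  have hindf : ∀ i, IndepFun (X i) (fun ω => logA a (T i ω)) μ := fun i =>
    (hind i).symm.comp measurable_id measurable_logA
  have hfT_int : ∀ i, Integrable (fun ω => logA a (T i ω)) μ := fun i =>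
    integrable_logA_comp ha (hTmeas i) (hTnn i) (hTint i)
  have hprod_int : ∀ i, Integrable (fun ω => X i ω * logA a (T i ω)) μ := fun i =>
    (hindf i).integrable_mul (hXint i) (hfT_int i)
  -- pointwise bound
  have hpt : ∀ ω, ENNReal.ofReal (S ω * logA a (S ω))
      ≤ ∑ i, (ENNReal.ofReal (X i ω * logA a (X i ω))
        + ENNReal.ofReal (X i ω * logA a (T i ω))) := by
    intro ω
    have hreal : S ω * logA a (S ω)
        ≤ ∑ i, (X i ω * logA a (X i ω) + X i ω * logA a (T i ω)) := by
      have : S ω * logA a (S ω) = ∑ i, X i ω * logA a (S ω) := by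
        rw [hSdef, Finset.sum_mul]
      rw [this]
      apply Finset.sum_le_sum
      intro i _
      have h1 : logA a (S ω) ≤ logA a (X i ω) + logA a (T i ω) := by
        rw [hsplit i ω]; exact logA_subadd ha (hXnonneg i ω) (hTnn i ω)
      calc X i ω * logA a (S ω) ≤ X i ω * (logA a (X i ω) + logA a (T i ω)) :=
            mul_le_mul_of_nonneg_left h1 (hXnonneg i ω)
        _ = X i ω * logA a (X i ω) + X i ω * logA a (T i ω) := by ring
    calc ENNReal.ofReal (S ω * logA a (S ω))
        ≤ ENNReal.ofReal (∑ i, (X i ω * logA a (X i ω) + X i ω * logA a (T i ω))) :=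
          ENNReal.ofReal_le_ofReal hreal
      _ = ∑ i, ENNReal.ofReal (X i ω * logA a (X i ω) + X i ω * logA a (T i ω)) :=
          ENNReal.ofReal_sum_of_nonneg (fun i _ =>
            add_nonneg (mul_nonneg (hXnonneg i ω) (logA_nonneg ha (hXnonneg i ω)))
              (mul_nonneg (hXnonneg i ω) (logA_nonneg ha (hTnn i ω))))
      _ = ∑ i, (ENNReal.ofReal (X i ω * logA a (X i ω))
          + ENNReal.ofReal (X i ω * logA a (T i ω))) :=
          Finset.sum_congr rfl (fun i _ =>
            ENNReal.ofReal_add (mul_nonneg (hXnonneg i ω) (logA_nonneg ha (hXnonneg i ω)))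
              (mul_nonneg (hXnonneg i ω) (logA_nonneg ha (hTnn i ω))))
  have hAmeas : ∀ i, Measurable (fun ω => ENNReal.ofReal (X i ω * logA a (X i ω))) := fun i =>
    ((hXmeas i).mul (measurable_logA.comp (hXmeas i))).ennreal_ofReal
  have hBmeas : ∀ i, Measurable (fun ω => ENNReal.ofReal (X i ω * logA a (T i ω))) := fun i =>
    ((hXmeas i).mul (measurable_logA.comp (hTmeas i))).ennreal_ofReal
  -- the key term bound
  have hB : ∀ i, ∫⁻ ω, ENNReal.ofReal (X i ω * logA a (T i ω)) ∂μ
      ≤ ENNReal.ofReal ((∫ ω, X i ω ∂μ) * logA a (∫ ω, S ω ∂μ)) := by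
    intro i
    rw [← ofReal_integral_eq_lintegral_ofReal (hprod_int i)
      (Filter.Eventually.of_forall fun ω =>
        mul_nonneg (hXnonneg i ω) (logA_nonneg ha (hTnn i ω)))]
    apply ENNReal.ofReal_le_ofReal
    have hmul : ∫ ω, X i ω * logA a (T i ω) ∂μ
        = (∫ ω, X i ω ∂μ) * ∫ ω, logA a (T i ω) ∂μ := by
      have := (hindf i).integral_mul_eq_mul_integral (hXint i).aestronglyMeasurable
        (hfT_int i).aestronglyMeasurable
      simpa [Pi.mul_apply] using this
    rw [hmul]
    have hj : ∫ ω, logA a (T i ω) ∂μ ≤ logA a (∫ ω, T i ω ∂μ) :=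
      jensen_logA ha (hTmeas i) (hTnn i) (hTint i)
    have hTS : ∫ ω, T i ω ∂μ ≤ ∫ ω, S ω ∂μ :=
      integral_mono (hTint i) hSint (fun ω => by
        rw [hsplit i ω]; linarith [hXnonneg i ω])
    have hmono2 : logA a (∫ ω, T i ω ∂μ) ≤ logA a (∫ ω, S ω ∂μ) :=
      logA_mono ha (integral_nonneg (hTnn i)) hTS
    exact mul_le_mul_of_nonneg_left (hj.trans hmono2) (integral_nonneg (hXnonneg i))
  -- assemble
  calc ∫⁻ ω, ENNReal.ofReal (S ω * logA a (S ω)) ∂μ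
      ≤ ∫⁻ ω, ∑ i, (ENNReal.ofReal (X i ω * logA a (X i ω))
          + ENNReal.ofReal (X i ω * logA a (T i ω))) ∂μ := lintegral_mono hpt
    _ = ∑ i, ∫⁻ ω, (ENNReal.ofReal (X i ω * logA a (X i ω))
          + ENNReal.ofReal (X i ω * logA a (T i ω))) ∂μ :=
        lintegral_finset_sum _ (fun i _ => (hAmeas i).add (hBmeas i))
    _ = ∑ i, (∫⁻ ω, ENNReal.ofReal (X i ω * logA a (X i ω)) ∂μ
          + ∫⁻ ω, ENNReal.ofReal (X i ω * logA a (T i ω)) ∂μ) :=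
        Finset.sum_congr rfl (fun i _ => lintegral_add_left (hAmeas i) _)
    _ = (∑ i, ∫⁻ ω, ENNReal.ofReal (X i ω * logA a (X i ω)) ∂μ)
          + ∑ i, ∫⁻ ω, ENNReal.ofReal (X i ω * logA a (T i ω)) ∂μ :=
        Finset.sum_add_distrib
    _ ≤ (∑ i, ∫⁻ ω, ENNReal.ofReal (X i ω * logA a (X i ω)) ∂μ)
          + ∑ i, ENNReal.ofReal ((∫ ω, X i ω ∂μ) * logA a (∫ ω, S ω ∂μ)) :=
        add_le_add_right (Finset.sum_le_sum fun i _ => hB i) _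
    _ = (∑ i, ∫⁻ ω, ENNReal.ofReal (X i ω * logA a (X i ω)) ∂μ)
          + ENNReal.ofReal ((∫ ω, S ω ∂μ) * logA a (∫ ω, S ω ∂μ)) := by
        congr 1
        rw [← ENNReal.ofReal_sum_of_nonneg (fun i _ =>
          mul_nonneg (integral_nonneg (hXnonneg i)) (logA_nonneg ha (integral_nonneg hSnn))),
          ← Finset.sum_mul]
        congr 2
        rw [hSdef]
        exact (integral_finset_sum Finset.univ (fun i _ => hXint i)).symm
    _ = ENNReal.ofReal ((∫ ω, S ω ∂μ) * logA a (∫ ω, S ω ∂μ))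
          + ∑ i, ∫⁻ ω, ENNReal.ofReal (X i ω * logA a (X i ω)) ∂μ := add_comm _ _

end Main
section Transfer

open MeasureTheory ProbabilityTheory

lemma iIndepFun_of_ae_eq {ι Ω : Type*} {mΩ : MeasurableSpace Ω} {μ : Measure Ω}
    {β : ι → Type*} {m : ∀ i, MeasurableSpace (β i)} {f g : ∀ i, Ω → β i}
    (h : iIndepFun f μ) (hfg : ∀ i, f i =ᵐ[μ] g i) : iIndepFun g μ := by
  rw [iIndepFun_iff_measure_inter_preimage_eq_mul] at h ⊢
  intro S sets hsets
  have hae : ∀ᵐ ω ∂μ, ∀ i ∈ S, f i ω = g i ω :=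
    (MeasureTheory.ae_ball_iff S.countable_toSet).2 fun i _ => hfg i
  have h1 : μ (⋂ i ∈ S, g i ⁻¹' sets i) = μ (⋂ i ∈ S, f i ⁻¹' sets i) := by
    apply measure_congr
    rw [Filter.eventuallyEq_set]
    filter_upwards [hae] with ω hω
    simp only [Set.mem_iInter, Set.mem_preimage]
    constructor
    · intro hmem i hi; rw [hω i hi]; exact hmem i hi
    · intro hmem i hi; rw [← hω i hi]; exact hmem i hi
  have h2 : ∀ i ∈ S, μ (g i ⁻¹' sets i) = μ (f i ⁻¹' sets i) := by
    intro i _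
    apply measure_congr
    rw [Filter.eventuallyEq_set]
    filter_upwards [hfg i] with ω hω
    simp [Set.mem_preimage, hω]
  rw [h1, Finset.prod_congr rfl h2]
  exact h S hsets

end Transfer

/-- for independent nonnegative integrable random variables
`X_1, …, X_N` with sum `S`,
`E[S log^{(a)}(S)] ≤ E[S] log^{(a)}(E[S]) + ∑_i E[X_i log^{(a)}(X_i)]`,
the expectations of the nonnegative quantities being taken in `[0,∞]`. -/
theorem sum_logA_inequality
    {Ω : Type*} {mΩ : MeasurableSpace Ω} (μ : Measure Ω) [IsProbabilityMeasure μ]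
    (a : ℝ) (ha : 1 ≤ a) (N : ℕ) (X : Fin N → Ω → ℝ)
    (hXnonneg : ∀ i ω, 0 ≤ X i ω)
    (hXint : ∀ i, Integrable (X i) μ)
    (hXindep : iIndepFun X μ) :
    ∫⁻ ω, ENNReal.ofReal ((∑ i, X i ω) * logA a (∑ i, X i ω)) ∂μ
      ≤ ENNReal.ofReal ((∫ ω, ∑ i, X i ω ∂μ) * logA a (∫ ω, ∑ i, X i ω ∂μ))
        + ∑ i, ∫⁻ ω, ENNReal.ofReal (X i ω * logA a (X i ω)) ∂μ := by
  classical
  -- measurable modifications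
  set Y : Fin N → Ω → ℝ := fun i ω => max ((hXint i).1.mk (X i) ω) 0 with hYdef
  have hYmeas : ∀ i, Measurable (Y i) := fun i =>
    ((hXint i).1.stronglyMeasurable_mk.measurable).max measurable_const
  have hYnonneg : ∀ i ω, 0 ≤ Y i ω := fun i ω => le_max_right _ _
  have hXY : ∀ i, X i =ᵐ[μ] Y i := by
    intro i
    filter_upwards [(hXint i).1.ae_eq_mk] with ω hω
    rw [hYdef]
    simp only
    rw [← hω, max_eq_left (hXnonneg i ω)]
  have hYint : ∀ i, Integrable (Y i) μ := fun i => (hXint i).congr (hXY i)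
  have hYindep : iIndepFun Y μ :=
    iIndepFun_of_ae_eq hXindep hXY
  have haeall : ∀ᵐ ω ∂μ, ∀ i, X i ω = Y i ω := MeasureTheory.ae_all_iff.2 fun i => hXY i
  have hSae : ∀ᵐ ω ∂μ, (∑ i, X i ω) = ∑ i, Y i ω := by
    filter_upwards [haeall] with ω hω
    exact Finset.sum_congr rfl fun i _ => hω i
  have hIS : (∫ ω, ∑ i, X i ω ∂μ) = ∫ ω, ∑ i, Y i ω ∂μ := integral_congr_ae hSae
  have hLS : ∫⁻ ω, ENNReal.ofReal ((∑ i, X i ω) * logA a (∑ i, X i ω)) ∂μ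
      = ∫⁻ ω, ENNReal.ofReal ((∑ i, Y i ω) * logA a (∑ i, Y i ω)) ∂μ := by
    apply lintegral_congr_ae
    filter_upwards [hSae] with ω hω
    rw [hω]
  have hLX : ∀ i, ∫⁻ ω, ENNReal.ofReal (X i ω * logA a (X i ω)) ∂μ
      = ∫⁻ ω, ENNReal.ofReal (Y i ω * logA a (Y i ω)) ∂μ := by
    intro i
    apply lintegral_congr_ae
    filter_upwards [hXY i] with ω hω
    rw [hω]
  rw [hLS, hIS, Finset.sum_congr rfl fun i _ => hLX i]
  exact sum_logA_inequality_meas μ a ha N Y hYnonneg hYmeas hYint hYindep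
end

section
/- Let ρ > 1 and let Y be a nonnegative random variable. Then Σ_{n≥1} E[Y · 1_{Y > ρ^n}] ≤ (1/log ρ) · E[Y · log^{(1)}(Y)], where both sides take values in [0,∞]. -/
open MeasureTheory

lemma log_le_logA_one (y : ℝ) (hy : 0 < y) : Real.log y ≤ logA 1 y := by
  unfold logA
  split_ifs with h
  · have hpos : 0 < y / Real.exp 1 := by positivity
    have := Real.log_le_sub_one_of_pos hpos
    rw [Real.log_div (ne_of_gt hy) (Real.exp_ne_zero 1), Real.log_exp] at this
    have : Real.log y ≤ y / Real.exp 1 := by linarith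
    simpa [pow_one, div_mul_eq_mul_div, one_mul, mul_comm] using this.trans_eq (div_eq_mul_inv _ _)
  · simp

lemma key_pointwise (ρ : ℝ) (hρ : 1 < ρ) (y : ℝ) (hy : 0 ≤ y) :
    ∑' n : ℕ, (if ρ ^ (n + 1) < y then ENNReal.ofReal y else 0)
      ≤ ENNReal.ofReal (1 / Real.log ρ) * ENNReal.ofReal (y * logA 1 y) := by
  have hlogρ : 0 < Real.log ρ := Real.log_pos hρ
  rcases le_or_gt y 1 with hy1 | hy1
  · have hzero : ∀ n : ℕ, (if ρ ^ (n + 1) < y then ENNReal.ofReal y else 0) = 0 := by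
      intro n
      have : ¬ ρ ^ (n + 1) < y := by
        have : (1 : ℝ) < ρ ^ (n + 1) := one_lt_pow₀ hρ (Nat.succ_ne_zero n)
        linarith
      simp [this]
    simp [hzero]
  · set L := Real.log y / Real.log ρ with hL
    have hy0 : 0 < y := lt_trans one_pos hy1
    have hlogy : 0 < Real.log y := Real.log_pos hy1
    have hL0 : 0 ≤ L := by positivity
    set K := ⌊L⌋₊ with hK
    have hsupp : ∀ n : ℕ, n ∉ Finset.range K →
        (if ρ ^ (n + 1) < y then ENNReal.ofReal y else 0) = 0 := by
      intro n hn
      have hnot : ¬ ρ ^ (n + 1) < y := by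
        intro h
        have hpow : (0 : ℝ) < ρ ^ (n + 1) := pow_pos (lt_trans one_pos hρ) _
        have hlt : Real.log (ρ ^ (n + 1)) < Real.log y := Real.log_lt_log hpow h
        rw [Real.log_pow] at hlt
        have hlt2 : ((n + 1 : ℕ) : ℝ) < L := by
          rw [hL, lt_div_iff₀ hlogρ]; exact hlt
        have : n + 1 ≤ K := Nat.le_floor (le_of_lt hlt2)
        exact hn (Finset.mem_range.2 (Nat.lt_of_succ_le this))
      simp [hnot]
    rw [tsum_eq_sum hsupp]
    have hsum : ∑ n ∈ Finset.range K, (if ρ ^ (n + 1) < y then ENNReal.ofReal y else 0)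
        ≤ ∑ n ∈ Finset.range K, ENNReal.ofReal y := by
      apply Finset.sum_le_sum
      intro n _
      split_ifs <;> simp
    refine le_trans hsum ?_
    rw [Finset.sum_const, Finset.card_range, nsmul_eq_mul]
    have hcast : (K : ENNReal) = ENNReal.ofReal (K : ℝ) := by
      simp [ENNReal.ofReal_natCast]
    rw [hcast, ← ENNReal.ofReal_mul (by positivity), ← ENNReal.ofReal_mul (by positivity)]
    apply ENNReal.ofReal_le_ofReal
    have hKL : (K : ℝ) ≤ L := Nat.floor_le hL0
    have hlog_le : Real.log y ≤ logA 1 y := log_le_logA_one y hy0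
    have h1 : (K : ℝ) * y ≤ L * y := mul_le_mul_of_nonneg_right hKL hy
    have h2 : L * y ≤ 1 / Real.log ρ * (y * logA 1 y) := by
      rw [hL]
      rw [div_mul_eq_mul_div, one_div, inv_mul_eq_div, div_le_div_iff₀ hlogρ hlogρ]
      nlinarith [mul_le_mul_of_nonneg_left hlog_le hy]
    linarith

/-- for `ρ > 1` and a nonnegative random variable `Y`,
`∑_{n≥1} E[Y · 1_{Y > ρ^n}] ≤ (1/log ρ) · E[Y · log^{(1)}(Y)]`, in `[0,∞]`. -/
theorem tail_series_le_LlogL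
    {Ω : Type*} {mΩ : MeasurableSpace Ω} (μ : Measure Ω) [IsProbabilityMeasure μ]
    (ρ : ℝ) (hρ : 1 < ρ) (Y : Ω → ℝ) (hYmeas : Measurable Y) (hYnonneg : ∀ ω, 0 ≤ Y ω) :
    ∑' n : ℕ, ∫⁻ ω in {ω | ρ ^ (n + 1) < Y ω}, ENNReal.ofReal (Y ω) ∂μ
      ≤ ENNReal.ofReal (1 / Real.log ρ)
        * ∫⁻ ω, ENNReal.ofReal (Y ω * logA 1 (Y ω)) ∂μ := by
  have hmeas : ∀ n : ℕ, MeasurableSet {ω | ρ ^ (n + 1) < Y ω} := fun n =>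
    measurableSet_lt measurable_const hYmeas
  have hstep : ∀ n : ℕ, ∫⁻ ω in {ω | ρ ^ (n + 1) < Y ω}, ENNReal.ofReal (Y ω) ∂μ
      = ∫⁻ ω, Set.indicator {ω | ρ ^ (n + 1) < Y ω} (fun ω => ENNReal.ofReal (Y ω)) ω ∂μ := by
    intro n
    rw [lintegral_indicator (hmeas n)]
  calc ∑' n : ℕ, ∫⁻ ω in {ω | ρ ^ (n + 1) < Y ω}, ENNReal.ofReal (Y ω) ∂μ
      = ∫⁻ ω, ∑' n : ℕ, Set.indicator {ω | ρ ^ (n + 1) < Y ω}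
          (fun ω => ENNReal.ofReal (Y ω)) ω ∂μ := by
        rw [lintegral_tsum (fun n => ((hYmeas.ennreal_ofReal).indicator (hmeas n)).aemeasurable)]
        exact tsum_congr hstep
    _ ≤ ∫⁻ ω, ENNReal.ofReal (1 / Real.log ρ) * ENNReal.ofReal (Y ω * logA 1 (Y ω)) ∂μ := by
        apply lintegral_mono
        intro ω
        have := key_pointwise ρ hρ (Y ω) (hYnonneg ω)
        simpa [Set.indicator_apply, Set.mem_setOf_eq] using this
    _ = ENNReal.ofReal (1 / Real.log ρ)
          * ∫⁻ ω, ENNReal.ofReal (Y ω * logA 1 (Y ω)) ∂μ := by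
        rw [lintegral_const_mul' _ _ ENNReal.ofReal_ne_top]
end

section
/- Let ρ > 1, α ≥ 1, and let (γ_n)_{n≥1} be nonnegative reals with Σ_{n≥1} γ_n/n^α < ∞. Then there exists a constant C ≥ 0, depending only on ρ, α and (γ_n), such that for every nonnegative random variable Y: Σ_{n≥1} γ_n · E[Y · 1_{Y > ρ^n}] ≤ C · E[Y · log^{(α)}(Y)], where both sides take values in [0,∞]. -/
open MeasureTheory

lemma logA_pos {a : ℝ} (ha : 1 ≤ a) {x : ℝ} (hx : 0 < x) : 0 < logA a x := by
  have ha0 : 0 < a := lt_of_lt_of_le one_pos ha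
  unfold logA
  split_ifs with h
  · exact mul_pos (Real.rpow_pos_of_pos (by positivity) a) hx
  · have h1 : a ≤ Real.log x := (Real.le_log_iff_exp_le hx).2 (not_lt.1 h)
    exact Real.rpow_pos_of_pos (lt_of_lt_of_le ha0 h1) a

lemma logA_mono_s13 {a : ℝ} (ha : 1 ≤ a) : Monotone (logA a) := by
  have ha0 : (0:ℝ) ≤ a := le_trans zero_le_one ha
  have he : (0:ℝ) < Real.exp 1 := Real.exp_pos 1
  have hslope : (0:ℝ) ≤ (a / Real.exp 1) ^ a := Real.rpow_nonneg (by positivity) a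
  have hjunc : (a / Real.exp 1) ^ a * Real.exp a = a ^ a := by
    rw [← Real.exp_one_rpow a, ← Real.mul_rpow (by positivity) he.le,
      div_mul_cancel₀ _ (ne_of_gt he)]
  intro x y hxy
  unfold logA
  split_ifs with hx hy hy
  · exact mul_le_mul_of_nonneg_left hxy hslope
  · have hy' : Real.exp a ≤ y := not_lt.1 hy
    have hypos : 0 < y := lt_of_lt_of_le (Real.exp_pos a) hy'
    have h1 : (a / Real.exp 1) ^ a * x ≤ a ^ a := by
      rw [← hjunc]; exact mul_le_mul_of_nonneg_left hx.le hslope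
    have h2 : a ≤ Real.log y := (Real.le_log_iff_exp_le hypos).2 hy'
    calc (a / Real.exp 1) ^ a * x ≤ a ^ a := h1
      _ ≤ Real.log y ^ a := Real.rpow_le_rpow ha0 h2 ha0
  · exact absurd hxy (not_le.2 (lt_of_lt_of_le hy (not_lt.1 hx)))
  · have hx' : Real.exp a ≤ x := not_lt.1 hx
    have hxpos : 0 < x := lt_of_lt_of_le (Real.exp_pos a) hx'
    have h2 : a ≤ Real.log x := (Real.le_log_iff_exp_le hxpos).2 hx'
    exact Real.rpow_le_rpow (le_trans ha0 h2) (Real.log_le_log hxpos hxy) ha0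

lemma logA_meas {a : ℝ} (ha : 0 ≤ a) : Measurable (logA a) := by
  unfold logA
  exact Measurable.ite (measurableSet_lt measurable_id measurable_const)
    (measurable_const.mul measurable_id)
    ((Real.continuous_rpow_const ha).measurable.comp Real.measurable_log)

/-- for `ρ > 1`, `α ≥ 1` and nonnegative weights `(γ_n)_{n≥1}` with
`∑_{n≥1} γ_n / n^α < ∞`, there is a constant `C ≥ 0` (depending only on `ρ`, `α`, `γ`)
such that for every nonnegative random variable `Y`,
`∑_{n≥1} γ_n E[Y · 1_{Y > ρ^n}] ≤ C · E[Y · log^{(α)}(Y)]`, in `[0,∞]`. -/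
theorem weighted_tail_series_le_LlogL
    (ρ : ℝ) (hρ : 1 < ρ) (α : ℝ) (hα : 1 ≤ α)
    (γ : ℕ → ℝ) (hγnonneg : ∀ n, 0 ≤ γ n)
    (hγsum : Summable fun n : ℕ => γ (n + 1) / ((n : ℝ) + 1) ^ α) :
    ∃ C : ℝ, 0 ≤ C ∧
      ∀ (Ω : Type) (mΩ : MeasurableSpace Ω) (μ : Measure Ω), IsProbabilityMeasure μ →
        ∀ Y : Ω → ℝ, Measurable Y → (∀ ω, 0 ≤ Y ω) →
          ∑' n : ℕ, ENNReal.ofReal (γ (n + 1))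
              * ∫⁻ ω in {ω | ρ ^ (n + 1) < Y ω}, ENNReal.ofReal (Y ω) ∂μ
            ≤ ENNReal.ofReal C * ∫⁻ ω, ENNReal.ofReal (Y ω * logA α (Y ω)) ∂μ := by
  have hα0 : (0:ℝ) ≤ α := le_trans zero_le_one hα
  have hρ0 : (0:ℝ) < ρ := lt_trans one_pos hρ
  set c := Real.log ρ with hc_def
  have hc : 0 < c := Real.log_pos hρ
  set m : ℝ := min (c ^ α) ((c / Real.exp 1) ^ α * ρ) with hm_def
  have hm : 0 < m := lt_min (Real.rpow_pos_of_pos hc α)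
    (mul_pos (Real.rpow_pos_of_pos (by positivity) α) hρ0)
  -- lower bound on logA α (ρ^(n+1))
  have hLlow : ∀ n : ℕ, m * ((n:ℝ) + 1) ^ α ≤ logA α (ρ ^ (n + 1)) := by
    intro n
    have ht0 : (0:ℝ) < ρ ^ (n + 1) := pow_pos hρ0 _
    have hn1 : (0:ℝ) < (n:ℝ) + 1 := by positivity
    unfold logA
    split_ifs with h
    · have hlog : ((n + 1 : ℕ) : ℝ) * c < α := by
        have h' := (Real.log_lt_iff_lt_exp ht0).2 h
        rwa [Real.log_pow] at h'
      have h1 : (n:ℝ) + 1 ≤ α / c := by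
        rw [le_div_iff₀ hc]; push_cast at hlog ⊢; linarith
      have h2 : ((n:ℝ) + 1) ^ α ≤ (α / c) ^ α := Real.rpow_le_rpow hn1.le h1 hα0
      have h3 : (c / Real.exp 1) ^ α * (α / c) ^ α = (α / Real.exp 1) ^ α := by
        rw [← Real.mul_rpow (by positivity) (by positivity)]
        congr 1
        field_simp
      have h4 : ρ ≤ ρ ^ (n + 1) := le_self_pow₀ hρ.le (Nat.succ_ne_zero n)
      calc m * ((n:ℝ) + 1) ^ α ≤ ((c / Real.exp 1) ^ α * ρ) * ((α / c) ^ α) :=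
            mul_le_mul (min_le_right _ _) h2 (by positivity) (by positivity)
        _ = (α / Real.exp 1) ^ α * ρ := by rw [mul_right_comm, h3]
        _ ≤ (α / Real.exp 1) ^ α * ρ ^ (n + 1) :=
            mul_le_mul_of_nonneg_left h4 (by positivity)
    · rw [Real.log_pow]
      push_cast
      rw [Real.mul_rpow (by positivity) hc.le]
      calc m * ((n:ℝ) + 1) ^ α ≤ c ^ α * ((n:ℝ) + 1) ^ α :=
            mul_le_mul_of_nonneg_right (min_le_left _ _) (by positivity)
        _ = ((n:ℝ) + 1) ^ α * c ^ α := mul_comm _ _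
  have hLpos : ∀ n : ℕ, 0 < logA α (ρ ^ (n + 1)) := fun n => logA_pos hα (pow_pos hρ0 _)
  set f : ℕ → ℝ := fun n => γ (n + 1) / logA α (ρ ^ (n + 1)) with hf_def
  have hf_nonneg : ∀ n, 0 ≤ f n := fun n => div_nonneg (hγnonneg _) (hLpos n).le
  have hf_le : ∀ n, f n ≤ m⁻¹ * (γ (n + 1) / ((n:ℝ) + 1) ^ α) := by
    intro n
    have hX : (0:ℝ) < ((n:ℝ) + 1) ^ α := by positivity
    have h1 : f n ≤ γ (n + 1) / (m * ((n:ℝ) + 1) ^ α) :=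
      div_le_div_of_nonneg_left (hγnonneg _) (by positivity) (hLlow n)
    calc f n ≤ γ (n + 1) / (m * ((n:ℝ) + 1) ^ α) := h1
      _ = m⁻¹ * (γ (n + 1) / ((n:ℝ) + 1) ^ α) := by
          field_simp
  have hfsum : Summable f := Summable.of_nonneg_of_le hf_nonneg hf_le (hγsum.mul_left m⁻¹)
  refine ⟨∑' n, f n, tsum_nonneg hf_nonneg, ?_⟩
  intro Ω mΩ μ hμ Y hY hY0
  have hCof : ENNReal.ofReal (∑' n, f n) = ∑' n, ENNReal.ofReal (f n) :=
    ENNReal.ofReal_tsum_of_nonneg hf_nonneg hfsum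
  set I := ∫⁻ ω, ENNReal.ofReal (Y ω * logA α (Y ω)) ∂μ with hI_def
  have hImeas : Measurable fun ω => ENNReal.ofReal (Y ω * logA α (Y ω)) :=
    (hY.mul ((logA_meas hα0).comp hY)).ennreal_ofReal
  have key : ∀ n : ℕ, ENNReal.ofReal (γ (n + 1))
      * ∫⁻ ω in {ω | ρ ^ (n + 1) < Y ω}, ENNReal.ofReal (Y ω) ∂μ
      ≤ ENNReal.ofReal (f n) * I := by
    intro n
    set L := logA α (ρ ^ (n + 1)) with hL_def
    set A := {ω | ρ ^ (n + 1) < Y ω} with hA_def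
    have step1 : ENNReal.ofReal L * ∫⁻ ω in A, ENNReal.ofReal (Y ω) ∂μ ≤ I := by
      calc ENNReal.ofReal L * ∫⁻ ω in A, ENNReal.ofReal (Y ω) ∂μ
          = ∫⁻ ω in A, ENNReal.ofReal L * ENNReal.ofReal (Y ω) ∂μ :=
            (lintegral_const_mul _ hY.ennreal_ofReal).symm
        _ = ∫⁻ ω in A, ENNReal.ofReal (L * Y ω) ∂μ := by
            exact lintegral_congr fun ω => (ENNReal.ofReal_mul (hLpos n).le).symm
        _ ≤ ∫⁻ ω in A, ENNReal.ofReal (Y ω * logA α (Y ω)) ∂μ := by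
            refine setLIntegral_mono hImeas fun ω hω => ?_
            refine ENNReal.ofReal_le_ofReal ?_
            rw [mul_comm]
            exact mul_le_mul_of_nonneg_left (logA_mono_s13 hα (le_of_lt hω)) (hY0 ω)
        _ ≤ I := setLIntegral_le_lintegral _ _
    have step2 : (∫⁻ ω in A, ENNReal.ofReal (Y ω) ∂μ) ≤ I / ENNReal.ofReal L := by
      rw [ENNReal.le_div_iff_mul_le (Or.inl (ENNReal.ofReal_pos.2 (hLpos n)).ne')
        (Or.inl ENNReal.ofReal_ne_top)]
      rw [mul_comm]; exact step1
    calc ENNReal.ofReal (γ (n + 1)) * ∫⁻ ω in A, ENNReal.ofReal (Y ω) ∂μ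
        ≤ ENNReal.ofReal (γ (n + 1)) * (I / ENNReal.ofReal L) := mul_le_mul_right step2 _
      _ = ENNReal.ofReal (f n) * I := by
          rw [hf_def]
          simp only []
          rw [ENNReal.ofReal_div_of_pos (hLpos n), div_eq_mul_inv, div_eq_mul_inv]
          ring
  calc ∑' n : ℕ, ENNReal.ofReal (γ (n + 1))
        * ∫⁻ ω in {ω | ρ ^ (n + 1) < Y ω}, ENNReal.ofReal (Y ω) ∂μ
      ≤ ∑' n : ℕ, ENNReal.ofReal (f n) * I := ENNReal.tsum_le_tsum key
    _ = (∑' n : ℕ, ENNReal.ofReal (f n)) * I := ENNReal.tsum_mul_right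
    _ = ENNReal.ofReal (∑' n, f n) * I := by rw [hCof]
end

section
/- Let p > 1, r ∈ (0,1), and set ρ := (1/r)^{1/(p−1)}. Then there exists a constant C ≥ 0, depending only on p and r, such that for every nonnegative random variable Y: Σ_{n≥1} r^n · E[Y^p · 1_{Y ≤ ρ^n}] ≤ C · E[Y], where both sides take values in [0,∞]. -/
open MeasureTheory

lemma truncated_ptwise (p : ℝ) (hp : 1 < p) (r : ℝ) (hr0 : 0 < r) (hr1 : r < 1)
    (y : ℝ) (hy : 0 ≤ y) :
    ∑' n : ℕ, ENNReal.ofReal (r ^ (n + 1)) *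
        (if y ≤ ((1 / r) ^ (1 / (p - 1))) ^ (n + 1) then ENNReal.ofReal (y ^ p) else 0)
      ≤ ENNReal.ofReal (1 - r)⁻¹ * ENNReal.ofReal y := by
  set ρ : ℝ := (1 / r) ^ (1 / (p - 1)) with hρdef
  have hp1 : (0:ℝ) < p - 1 := by linarith
  have hrinv : (1:ℝ) < 1 / r := by rw [lt_div_iff₀ hr0]; linarith
  have hρ1 : 1 < ρ := by
    rw [hρdef]
    exact (Real.one_lt_rpow_iff_of_pos (by positivity)).mpr
      (Or.inl ⟨hrinv, by positivity⟩)
  have hρ0 : 0 < ρ := lt_trans one_pos hρ1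
  have hex : ∃ n : ℕ, y ≤ ρ ^ (n + 1) := by
    obtain ⟨n, hn⟩ := pow_unbounded_of_one_lt y hρ1
    exact ⟨n, le_of_lt (lt_of_lt_of_le hn
      (pow_le_pow_right₀ (le_of_lt hρ1) (Nat.le_succ n)))⟩
  set N := Nat.find hex with hNdef
  have hN : y ≤ ρ ^ (N + 1) := Nat.find_spec hex
  have hNmin : ∀ m, m < N → ¬ y ≤ ρ ^ (m + 1) := fun m hm => Nat.find_min hex hm
  -- key: y ^ (p - 1) ≤ (1 / r) ^ (N + 1)
  have hkey : y ^ (p - 1) ≤ (1 / r) ^ (N + 1) := by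
    have h1 : y ^ (p - 1) ≤ (ρ ^ (N + 1)) ^ (p - 1) :=
      Real.rpow_le_rpow hy hN (le_of_lt hp1)
    have h2 : (ρ ^ (N + 1)) ^ (p - 1) = (1 / r) ^ (N + 1) := by
      rw [← Real.rpow_natCast ρ (N + 1), ← Real.rpow_mul hρ0.le, hρdef,
        ← Real.rpow_mul (by positivity : (0:ℝ) ≤ 1 / r),
        ← Real.rpow_natCast (1/r) (N+1)]
      congr 1
      push_cast
      field_simp
    linarith
  -- termwise bound
  have hterm : ∀ n : ℕ,
      ENNReal.ofReal (r ^ (n + 1)) *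
        (if y ≤ ρ ^ (n + 1) then ENNReal.ofReal (y ^ p) else 0)
      ≤ (if N ≤ n then ENNReal.ofReal (y * r ^ (n - N)) else 0) := by
    intro n
    by_cases hn : N ≤ n
    · simp only [hn, if_true]
      by_cases hin : y ≤ ρ ^ (n + 1)
      · simp only [hin, if_true]
        rw [← ENNReal.ofReal_mul (by positivity)]
        apply ENNReal.ofReal_le_ofReal
        rcases eq_or_lt_of_le hy with h0 | h0
        · rw [← h0, Real.zero_rpow (by linarith : p ≠ 0)]
          simp only [mul_zero, zero_mul]
          positivity
        · have hyp : y ^ p = y ^ (p - 1) * y := by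
            rw [← Real.rpow_add_one (ne_of_gt h0) (p - 1)]; ring_nf
          rw [hyp]
          have h3 : r ^ (n + 1) * (y ^ (p - 1) * y) ≤ r ^ (n + 1) * ((1 / r) ^ (N + 1) * y) := by
            apply mul_le_mul_of_nonneg_left (mul_le_mul_of_nonneg_right hkey (le_of_lt h0))
            positivity
          refine le_trans h3 (le_of_eq ?_)
          rw [show n + 1 = (n - N) + (N + 1) by omega, pow_add]
          field_simp
          ring_nf
          rw [inv_pow, mul_assoc r, mul_comm (r ^ N), ← mul_assoc, mul_inv_cancel₀ hr0.ne', one_mul,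
            mul_inv_cancel₀ (pow_ne_zero N hr0.ne')]
      · simp [hin]
    · have : ¬ y ≤ ρ ^ (n + 1) := hNmin n (by omega)
      simp [this, hn]
  refine le_trans (ENNReal.tsum_le_tsum hterm) ?_
  -- compute the geometric sum
  have hshift : ∑' n : ℕ, (if N ≤ n then ENNReal.ofReal (y * r ^ (n - N)) else 0)
      = ∑' k : ℕ, ENNReal.ofReal (y * r ^ k) := by
    rw [← Function.Injective.tsum_eq (g := fun k => k + N)
      (add_left_injective N) ?_]
    · congr 1; funext k
      simp [Nat.le_add_left]
    · intro n hn
      simp only [Function.mem_support] at hn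
      by_cases h : N ≤ n
      · refine ⟨n - N, ?_⟩
        show n - N + N = n
        omega
      · simp [h] at hn
  rw [hshift]
  have : ∀ k : ℕ, ENNReal.ofReal (y * r ^ k) = ENNReal.ofReal y * (ENNReal.ofReal r) ^ k := by
    intro k
    rw [ENNReal.ofReal_mul hy, ENNReal.ofReal_pow (le_of_lt hr0)]
  simp_rw [this]
  rw [ENNReal.tsum_mul_left, ENNReal.tsum_geometric]
  rw [mul_comm]
  apply mul_le_mul_left (le_of_eq ?_)
  rw [ENNReal.ofReal_inv_of_pos (by linarith : (0:ℝ) < 1 - r)]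
  congr 1
  rw [ENNReal.ofReal_sub 1 (le_of_lt hr0), ENNReal.ofReal_one]

/-- for `p > 1`, `r ∈ (0,1)` and `ρ = (1/r)^{1/(p−1)}`, there is a constant
`C ≥ 0` (depending only on `p` and `r`) such that for every nonnegative random variable `Y`,
`∑_{n≥1} r^n E[Y^p · 1_{Y ≤ ρ^n}] ≤ C · E[Y]`, in `[0,∞]`. -/
theorem truncated_moment_series_le
    (p : ℝ) (hp : 1 < p) (r : ℝ) (hr0 : 0 < r) (hr1 : r < 1) :
    ∃ C : ℝ, 0 ≤ C ∧
      ∀ (Ω : Type) (mΩ : MeasurableSpace Ω) (μ : Measure Ω), IsProbabilityMeasure μ →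
        ∀ Y : Ω → ℝ, Measurable Y → (∀ ω, 0 ≤ Y ω) →
          ∑' n : ℕ, ENNReal.ofReal (r ^ (n + 1))
              * ∫⁻ ω in {ω | Y ω ≤ ((1 / r) ^ (1 / (p - 1))) ^ (n + 1)},
                  ENNReal.ofReal (Y ω ^ p) ∂μ
            ≤ ENNReal.ofReal C * ∫⁻ ω, ENNReal.ofReal (Y ω) ∂μ := by
  refine ⟨(1 - r)⁻¹, inv_nonneg.mpr (by linarith), ?_⟩
  intro Ω mΩ μ hμ Y hY hY0
  set ρ : ℝ := (1 / r) ^ (1 / (p - 1)) with hρdef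
  have hmeas : ∀ n : ℕ, MeasurableSet {ω | Y ω ≤ ρ ^ (n + 1)} :=
    fun n => measurableSet_le hY measurable_const
  have hg : Measurable (fun ω => ENNReal.ofReal (Y ω ^ p)) := by fun_prop
  have hind : ∀ n : ℕ, Measurable
      (Set.indicator {ω | Y ω ≤ ρ ^ (n + 1)} (fun ω => ENNReal.ofReal (Y ω ^ p))) :=
    fun n => hg.indicator (hmeas n)
  have hswap : ∑' n : ℕ, ENNReal.ofReal (r ^ (n + 1))
      * ∫⁻ ω in {ω | Y ω ≤ ρ ^ (n + 1)}, ENNReal.ofReal (Y ω ^ p) ∂μ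
      = ∫⁻ ω, ∑' n : ℕ, ENNReal.ofReal (r ^ (n + 1)) *
          Set.indicator {ω | Y ω ≤ ρ ^ (n + 1)} (fun ω => ENNReal.ofReal (Y ω ^ p)) ω ∂μ := by
    rw [lintegral_tsum (fun n => ((hind n).const_mul _).aemeasurable)]
    congr 1; funext n
    rw [lintegral_const_mul _ (hind n), lintegral_indicator (hmeas n)]
  rw [hswap]
  calc ∫⁻ ω, ∑' n : ℕ, ENNReal.ofReal (r ^ (n + 1)) *
          Set.indicator {ω | Y ω ≤ ρ ^ (n + 1)} (fun ω => ENNReal.ofReal (Y ω ^ p)) ω ∂μ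
      ≤ ∫⁻ ω, ENNReal.ofReal (1 - r)⁻¹ * ENNReal.ofReal (Y ω) ∂μ := by
        apply lintegral_mono
        intro ω
        have := truncated_ptwise p hp r hr0 hr1 (Y ω) (hY0 ω)
        refine le_trans (le_of_eq ?_) this
        simp only [Set.indicator_apply, Set.mem_setOf_eq]
        rfl
    _ = ENNReal.ofReal (1 - r)⁻¹ * ∫⁻ ω, ENNReal.ofReal (Y ω) ∂μ := by
        rw [lintegral_const_mul _ hY.ennreal_ofReal]
end
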